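/- arXiv:1604.00402 — 5 statements merged into one kernel-verified Lean document; each statement's English description precedes it below -/
import Mathlib

section
/- Let n ≥ 2, let 𝓡 be a family of standard dyadic rectangles in ℝ^n, and let 1 ≤ d ≤ n−1 be an integer. Suppose there exist constants c > 0 and c' ≥ 1 such that for every sufficiently large k ∈ ℕ there exist measurable sets Θ_k ⊆ Y_k ⊆ ℝ^n with 0 < |Θ_k| < ∞, |Y_k| ≥ c·2^{dk} k^d |Θ_k|, and M_𝓡 χ_{Θ_k}(x) ≥ c'·2^{−dk} for every x ∈ Y_k. Then for every Orlicz function Φ satisfying Φ = o(Φ_d) at ∞, the maximal operator M_𝓡 does not satisfy a weak L^Φ inequality; in particular, M_𝓡 does not satisfy a weak (1,1) inequality. -/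
open MeasureTheory Set Filter
open scoped ENNReal

noncomputable section

/-- The standard rectangle `[0, α 0] × ⋯ × [0, α (n-1)]` in `ℝ^n`. -/
def stdRect (n : ℕ) (α : Fin n → ℝ) : Set (Fin n → ℝ) :=
  Set.univ.pi fun i => Set.Icc 0 (α i)

/-- A standard rectangle in `ℝ^n`: `[0,α₁]×⋯×[0,αₙ]` with `0 < αᵢ ≤ 1`. -/
def IsStandardRect {n : ℕ} (R : Set (Fin n → ℝ)) : Prop :=
  ∃ α : Fin n → ℝ, (∀ i, 0 < α i ∧ α i ≤ 1) ∧ R = stdRect n α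

/-- A standard dyadic rectangle in `ℝ^n`: each side is `2^{-mᵢ}` with `mᵢ ∈ ℕ`. -/
def IsStandardDyadicRect {n : ℕ} (R : Set (Fin n → ℝ)) : Prop :=
  ∃ m : Fin n → ℕ, R = stdRect n fun i => (2 : ℝ) ^ (-(m i : ℤ))

/-- The maximal operator associated to a family `𝓡` of rectangles, allowing all translates:
`M_𝓡 f (x) = sup { |R|⁻¹ ∫_{τ(R)} |f| : R ∈ 𝓡, τ translation, x ∈ τ(R) }`. -/
def maximalFn {n : ℕ} (𝓡 : Set (Set (Fin n → ℝ))) (f : (Fin n → ℝ) → ℝ)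
    (x : Fin n → ℝ) : ℝ≥0∞ :=
  ⨆ (R : Set (Fin n → ℝ)) (_ : R ∈ 𝓡) (v : Fin n → ℝ)
      (_ : x ∈ (fun y => v + y) '' R),
    (∫⁻ y in (fun y => v + y) '' R, ENNReal.ofReal |f y|) / volume R

/-- A family of sets has finite width if it is a finite union of subfamilies
each totally ordered by inclusion. -/
def FiniteWidth {β : Type*} (𝓕 : Set (Set β)) : Prop :=
  ∃ (N : ℕ) (c : Fin N → Set (Set β)),
    𝓕 = (⋃ i, c i) ∧ ∀ i, IsChain (· ⊆ ·) (c i)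

/-- An Orlicz function: convex, increasing on `[0,∞)`, vanishing at `0`. -/
def IsOrlicz (Φ : ℝ → ℝ) : Prop :=
  ConvexOn ℝ (Set.Ici 0) Φ ∧ MonotoneOn Φ (Set.Ici 0) ∧ Φ 0 = 0

/-- `Φ_d(t) = t (1 + log₊^d t)`. -/
def phiD (d : ℕ) (t : ℝ) : ℝ := t * (1 + max (Real.log t) 0 ^ d)

/-- `M_𝓡` satisfies a weak `L^Φ` inequality. -/
def WeakOrlicz {n : ℕ} (𝓡 : Set (Set (Fin n → ℝ))) (Φ : ℝ → ℝ) : Prop :=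
  ∃ C : ℝ, 0 < C ∧ ∀ f : (Fin n → ℝ) → ℝ, Measurable f →
    Integrable (fun x => Φ |f x|) → ∀ l : ℝ, 0 < l →
      volume {x | ENNReal.ofReal l < maximalFn 𝓡 f x} ≤
        ∫⁻ x, ENNReal.ofReal (Φ (C * |f x| / l))

/-- `M_𝓡` satisfies a weak `(1,1)` inequality. -/
def Weak11 {n : ℕ} (𝓡 : Set (Set (Fin n → ℝ))) : Prop :=
  ∃ C : ℝ, 0 < C ∧ ∀ f : (Fin n → ℝ) → ℝ, Measurable f → Integrable f →
    ∀ l : ℝ, 0 < l →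
      volume {x | ENNReal.ofReal l < maximalFn 𝓡 f x} ≤
        ENNReal.ofReal (C * (∫ x, |f x|) / l)

/-- `M_𝓡` satisfies a weak `L log^d L` inequality. -/
def WeakLLog {n : ℕ} (𝓡 : Set (Set (Fin n → ℝ))) (d : ℕ) : Prop :=
  ∃ c : ℝ, 0 < c ∧ ∀ f : (Fin n → ℝ) → ℝ, Measurable f → ∀ l : ℝ, 0 < l →
    volume {x | ENNReal.ofReal l < maximalFn 𝓡 f x} ≤
      ENNReal.ofReal c * ∫⁻ x, ENNReal.ofReal (phiD d (|f x| / l))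

/-- Projection onto the plane of coordinates `0` and `j`. -/
def planeProj {n : ℕ} (hn : 2 ≤ n) (j : Fin n) (x : Fin n → ℝ) : Fin 2 → ℝ :=
  ![x ⟨0, by omega⟩, x j]

/-- The family `𝓡_k = { [0,s₁]×⋯×[0,s_{n-1}]×[0, a/(s₁⋯s_{n-1})] : sᵢ ∈ 𝔻_k }`. -/
def guzmanFamily (n : ℕ) (hn : 2 ≤ n) (a : ℝ) (k : ℕ) : Set (Set (Fin n → ℝ)) :=
  { R | ∃ s : Fin n → ℝ,
      (∀ i : Fin n, (i : ℕ) < n - 1 → ∃ j : ℕ, j ≤ k ∧ s i = (2 : ℝ) ^ (-(j : ℤ))) ∧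
      s ⟨n - 1, by omega⟩ =
        a / ∏ i ∈ Finset.univ.filter (fun i : Fin n => (i : ℕ) < n - 1), s i ∧
      R = stdRect n s }

/-- The family `𝓡̃_k` in `ℝ^n`: rectangles
`[0,s₁]×⋯×[0,s_{n-2}]×[0, 2^{-(n-1)k}/(s₁⋯s_{n-2})]×[0,1]` with `sᵢ ∈ 𝔻_k`. -/
def exFamily (n : ℕ) (hn : 3 ≤ n) (k : ℕ) : Set (Set (Fin n → ℝ)) :=
  { R | ∃ s : Fin n → ℝ,
      (∀ i : Fin n, (i : ℕ) < n - 2 → ∃ j : ℕ, j ≤ k ∧ s i = (2 : ℝ) ^ (-(j : ℤ))) ∧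
      s ⟨n - 2, by omega⟩ = (2 : ℝ) ^ (-((n - 1) * k : ℤ)) /
        ∏ i ∈ Finset.univ.filter (fun i : Fin n => (i : ℕ) < n - 2), s i ∧
      s ⟨n - 1, by omega⟩ = 1 ∧
      R = stdRect n s }

/-- The hypothesis of Theorem `thm.stokn`: for every `k` there are a dyadic number
`α = 2^{-p} ≤ 2^{-k-1}` and strictly increasing dyadic numbers `0 < A i 0 < ⋯ < A i k ≤ 1`
(`i < n-1`) such that for every nonincreasing `J` with values `≤ k`,
the rectangle `(∏_{i<n-1} [0, A i (J i)]) × [0, 2^{-p}]` belongs to `𝓡`. -/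
def StokolosHyp (n : ℕ) (𝓡 : Set (Set (Fin n → ℝ))) : Prop :=
  ∀ k : ℕ, ∃ (p : ℕ) (A : ℕ → ℕ → ℝ),
    k + 1 ≤ p ∧
    (∀ i < n - 1, ∀ j ≤ k, ∃ m : ℕ, A i j = (2 : ℝ) ^ (-(m : ℤ))) ∧
    (∀ i < n - 1, ∀ j < k, A i j < A i (j + 1)) ∧
    (∀ i < n - 1, A i k ≤ 1) ∧
    ∀ J : ℕ → ℕ, (∀ l, J l ≤ k) → (∀ a b : ℕ, a ≤ b → J b ≤ J a) →
      stdRect n (fun i : Fin n =>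
        if (i : ℕ) < n - 1 then A (i : ℕ) (J (i : ℕ)) else (2 : ℝ) ^ (-(p : ℤ))) ∈ 𝓡

/-- For a chain `R_0 ≺ ⋯ ≺ R_k` with `R_j = ∏_l [0, α l j]`, the rectangle
`R^i_j = p_{1,…,i-1}(R_k) × p_{i,…,n}(R_j)` (here `i` is 0-indexed). -/
def hatRect (n : ℕ) (α : Fin n → ℕ → ℝ) (k : ℕ) (i : Fin n) (j : ℕ) :
    Set (Fin n → ℝ) :=
  { x | ∀ l : Fin n, ((l : ℕ) < (i : ℕ) → x l ∈ Set.Icc 0 (α l k)) ∧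
        ((i : ℕ) ≤ (l : ℕ) → x l ∈ Set.Icc 0 (α l j)) }

/-- Rademacher-type functions: `r 1 = χ_{ℤ+[0,1/2)}` and `r i (x) = r (i-1) (2x mod 1)`,
i.e. `r i (x) = 1` iff `fract (2^{i-1} x) < 1/2`. -/
def rademacher (i : ℕ) (x : ℝ) : ℝ :=
  if Int.fract ((2 : ℝ) ^ (i - 1) * x) < 1 / 2 then 1 else 0

/-- The set `Y_J ⊆ R₀` (here `J : ℕ → ℕ` carries the conventions `J 0 = k`, `J n = 0`;
coordinate `i` of `ℝ^n` is 0-indexed, corresponding to the paper's `i+1`). -/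
def Yset (n k : ℕ) (m : ℕ → ℕ → ℕ) (J : ℕ → ℕ) : Set (Fin n → ℝ) :=
  stdRect n (fun i => (2 : ℝ) ^ (-(m (i : ℕ) k : ℤ))) ∩
    { x | (∏ i : Fin n, ∏ μ ∈ Finset.Icc (J ((i : ℕ) + 1)) (J (i : ℕ)),
        rademacher (m (i : ℕ) μ) (x i)) = 1 }

/-- The set `E_{j₁,…,j_{r-1}}`: union of the `Y_J` over the `J` extending the given prefix
`j` on positions `1,…,r-1`, nonincreasing, with `J 0 = k` and `J n = 0`. -/
def Eset (n k r : ℕ) (m : ℕ → ℕ → ℕ) (j : ℕ → ℕ) : Set (Fin n → ℝ) :=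
  ⋃ J ∈ { J : ℕ → ℕ | J 0 = k ∧ J n = 0 ∧ (∀ a b : ℕ, a ≤ b → J b ≤ J a) ∧
      ∀ l, 1 ≤ l → l < r → J l = j l },
    Yset n k m J
/-- If, for some `1 ≤ d ≤ n-1`, a family `𝓡` of standard dyadic rectangles
admits, for all large `k`, sets `Θ_k ⊆ Y_k` with `|Y_k| ≥ c 2^{dk} k^d |Θ_k|` and
`M_𝓡 χ_{Θ_k} ≥ c' 2^{-dk}` on `Y_k`, then `M_𝓡` satisfies no weak `L^Φ` inequality for any
Orlicz function `Φ = o(Φ_d)` at `∞`; in particular `M_𝓡` has no weak `(1,1)` inequality. -/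
theorem no_weak_orlicz_of_testSets (n : ℕ) (hn : 2 ≤ n)
    (𝓡 : Set (Set (Fin n → ℝ))) (h𝓡 : ∀ R ∈ 𝓡, IsStandardDyadicRect R)
    (d : ℕ) (hd1 : 1 ≤ d) (hdn : d ≤ n - 1)
    (c c' : ℝ) (hc : 0 < c) (hc' : 1 ≤ c')
    (H : ∃ k₀ : ℕ, ∀ k : ℕ, k₀ ≤ k → ∃ Θ Y : Set (Fin n → ℝ),
      MeasurableSet Θ ∧ MeasurableSet Y ∧ Θ ⊆ Y ∧
      0 < volume Θ ∧ volume Θ < ⊤ ∧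
      ENNReal.ofReal (c * (2 : ℝ) ^ (d * k) * (k : ℝ) ^ d) * volume Θ ≤ volume Y ∧
      ∀ x ∈ Y, ENNReal.ofReal (c' * ((2 : ℝ) ^ (d * k))⁻¹) ≤
        maximalFn 𝓡 (Θ.indicator fun _ => (1 : ℝ)) x) :
    (∀ Φ : ℝ → ℝ, IsOrlicz Φ →
      Tendsto (fun t => Φ t / phiD d t) atTop (nhds 0) → ¬ WeakOrlicz 𝓡 Φ) ∧
    ¬ Weak11 𝓡 := by
  obtain ⟨k₀, hH⟩ := H
  have hc'0 : (0:ℝ) < c' := lt_of_lt_of_le one_pos hc'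
  -- Common reduction: a test set Θ together with the level-set lower bound.
  have main : ∀ k : ℕ, k₀ ≤ k → ∃ Θ : Set (Fin n → ℝ), MeasurableSet Θ ∧
      0 < volume Θ ∧ volume Θ < ⊤ ∧
      ENNReal.ofReal (c * (2:ℝ) ^ (d*k) * (k:ℝ) ^ d) * volume Θ ≤
        volume {x | ENNReal.ofReal (c' * ((2:ℝ) ^ (d*k))⁻¹ / 2) <
          maximalFn 𝓡 (Θ.indicator fun _ => (1:ℝ)) x} := by
    intro k hk
    obtain ⟨Θ, Y, hΘm, hYm, hΘY, hΘ0, hΘtop, hvol, hmax⟩ := hH k hk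
    refine ⟨Θ, hΘm, hΘ0, hΘtop, hvol.trans (measure_mono ?_)⟩
    intro x hx
    have hpos : (0:ℝ) < c' * ((2:ℝ)^(d*k))⁻¹ := by positivity
    exact lt_of_lt_of_le ((ENNReal.ofReal_lt_ofReal_iff hpos).2 (half_lt_self hpos))
      (hmax x hx)
  constructor
  · rintro Φ ⟨hconv, hmono, hΦ0⟩ ho ⟨C, hC, hW⟩
    have hTnn : ∀ k : ℕ, (0:ℝ) < 2 * C / c' * 2 ^ (d*k) := fun k => by positivity
    -- key inequality
    have key : ∀ k : ℕ, k₀ ≤ k →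
        c * 2 ^ (d*k) * (k:ℝ) ^ d ≤ Φ (2 * C / c' * 2 ^ (d*k)) := by
      intro k hk
      obtain ⟨Θ, hΘm, hΘ0, hΘtop, hvol⟩ := main k hk
      set f : (Fin n → ℝ) → ℝ := Θ.indicator fun _ => 1 with hf
      have hfm : Measurable f := measurable_const.indicator hΘm
      set l : ℝ := c' * ((2:ℝ) ^ (d*k))⁻¹ / 2 with hl
      have hlpos : 0 < l := by rw [hl]; positivity
      have hint : Integrable (fun x => Φ |f x|) := by
        have heq : (fun x => Φ |f x|) = Θ.indicator (fun _ => Φ 1) := by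
          funext x; by_cases hx : x ∈ Θ <;> simp [hf, hx, hΦ0]
        rw [heq]
        exact (integrable_indicator_iff hΘm).2 (integrableOn_const hΘtop.ne)
      have hbound := hW f hfm hint l hlpos
      have hlint : (∫⁻ x, ENNReal.ofReal (Φ (C * |f x| / l))) =
          ENNReal.ofReal (Φ (2 * C / c' * 2 ^ (d*k))) * volume Θ := by
        have heq : (fun x => ENNReal.ofReal (Φ (C * |f x| / l))) =
            Θ.indicator (fun _ => ENNReal.ofReal (Φ (2 * C / c' * 2 ^ (d*k)))) := by
          funext x
          by_cases hx : x ∈ Θ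
          · have harg : C * |f x| / l = 2 * C / c' * 2 ^ (d*k) := by
              have hfx : f x = 1 := Set.indicator_of_mem hx _
              rw [hfx, abs_one, mul_one, hl]
              field_simp
            simp [hx, harg]
          · simp [hf, hx, hΦ0]
        rw [heq, lintegral_indicator_const hΘm]
      have h1 : ENNReal.ofReal (c * (2:ℝ) ^ (d*k) * (k:ℝ) ^ d) * volume Θ ≤
          ENNReal.ofReal (Φ (2 * C / c' * 2 ^ (d*k))) * volume Θ := by
        calc ENNReal.ofReal (c * (2:ℝ) ^ (d*k) * (k:ℝ) ^ d) * volume Θ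
            ≤ volume {x | ENNReal.ofReal l < maximalFn 𝓡 f x} := hvol
          _ ≤ ∫⁻ x, ENNReal.ofReal (Φ (C * |f x| / l)) := hbound
          _ = _ := hlint
      have h2 := (ENNReal.mul_le_mul_iff_left hΘ0.ne' hΘtop.ne).1 h1
      have hΦnn : 0 ≤ Φ (2 * C / c' * 2 ^ (d*k)) := by
        have := hmono (Set.mem_Ici.2 le_rfl) (Set.mem_Ici.2 (hTnn k).le) (hTnn k).le
        rwa [hΦ0] at this
      exact (ENNReal.ofReal_le_ofReal_iff hΦnn).1 h2
    -- Asymptotic contradiction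
    set L : ℝ := |Real.log (2 * C / c')| + d * Real.log 2 with hLdef
    have hlog2 : (0:ℝ) ≤ Real.log 2 := Real.log_nonneg one_le_two
    have hLnn : 0 ≤ L := by
      rw [hLdef]; positivity
    set K : ℝ := 1 + L ^ d with hKdef
    have hK : 0 < K := by rw [hKdef]; positivity
    set δ : ℝ := c * c' / (2 * C * K) with hδdef
    have hδ : 0 < δ := by rw [hδdef]; positivity
    clear_value L K δ
    have h2d : (1:ℝ) < 2 ^ d := one_lt_pow₀ (by norm_num) (by omega)
    have hTt : Tendsto (fun k : ℕ => 2 * C / c' * (2:ℝ) ^ (d*k)) atTop atTop := by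
      have h1 : Tendsto (fun k : ℕ => ((2:ℝ)^d)^k) atTop atTop :=
        tendsto_pow_atTop_atTop_of_one_lt h2d
      have := h1.const_mul_atTop (show (0:ℝ) < 2 * C / c' by positivity)
      simpa [pow_mul] using this
    have hev1 : ∀ᶠ k : ℕ in atTop,
        Φ (2 * C / c' * (2:ℝ) ^ (d*k)) / phiD d (2 * C / c' * (2:ℝ) ^ (d*k)) < δ :=
      (ho.comp hTt).eventually_lt_const hδ
    have hev2 : ∀ᶠ k : ℕ in atTop,
        δ ≤ Φ (2 * C / c' * (2:ℝ) ^ (d*k)) / phiD d (2 * C / c' * (2:ℝ) ^ (d*k)) := by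
      filter_upwards [eventually_ge_atTop (max k₀ 1)] with k hk
      have hk0 : k₀ ≤ k := le_trans (le_max_left _ _) hk
      have hk1 : (1:ℝ) ≤ (k:ℝ) := by
        exact_mod_cast le_trans (le_max_right _ _) hk
      set T : ℝ := 2 * C / c' * (2:ℝ) ^ (d*k) with hTdef
      have hTpos : 0 < T := hTnn k
      clear_value T
      have hkey := key k hk0
      rw [← hTdef] at hkey
      have hlogT : Real.log T = Real.log (2*C/c') + (d*k : ℕ) * Real.log 2 := by
        rw [hTdef, Real.log_mul (by positivity) (by positivity), Real.log_pow]
      have hlogle : max (Real.log T) 0 ≤ L * k := by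
        have hLa : Real.log (2*C/c') ≤ |Real.log (2*C/c')| := le_abs_self _
        have habsnn : (0:ℝ) ≤ |Real.log (2*C/c')| := abs_nonneg _
        have h1 : Real.log T ≤ L * k := by
          rw [hlogT, hLdef]; push_cast
          nlinarith [mul_le_mul_of_nonneg_left hk1 habsnn]
        exact max_le h1 (by positivity)
      have hmax0 : (0:ℝ) ≤ max (Real.log T) 0 := le_max_right _ _
      have hpowle : max (Real.log T) 0 ^ d ≤ (L * k) ^ d :=
        pow_le_pow_left₀ hmax0 hlogle d
      have hkd1 : (1:ℝ) ≤ (k:ℝ) ^ d := by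
        calc (1:ℝ) = 1 ^ d := (one_pow d).symm
          _ ≤ (k:ℝ) ^ d := pow_le_pow_left₀ zero_le_one hk1 d
      have h3 : 1 + max (Real.log T) 0 ^ d ≤ K * (k:ℝ) ^ d := by
        have : (L * k) ^ d = L ^ d * (k:ℝ) ^ d := mul_pow _ _ _
        rw [hKdef]
        nlinarith
      have hphile : phiD d T ≤ T * (K * (k:ℝ) ^ d) := by
        have : phiD d T = T * (1 + max (Real.log T) 0 ^ d) := rfl
        rw [this]
        exact mul_le_mul_of_nonneg_left h3 hTpos.le
      have hphipos : 0 < phiD d T := by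
        have : phiD d T = T * (1 + max (Real.log T) 0 ^ d) := rfl
        rw [this]
        have : (0:ℝ) ≤ max (Real.log T) 0 ^ d := pow_nonneg hmax0 d
        nlinarith
      rw [le_div_iff₀ hphipos]
      calc δ * phiD d T ≤ δ * (T * (K * (k:ℝ) ^ d)) :=
            mul_le_mul_of_nonneg_left hphile hδ.le
        _ = c * 2 ^ (d*k) * (k:ℝ) ^ d := by
            rw [hδdef, hTdef]
            field_simp [hK.ne']
        _ ≤ Φ T := hkey
    obtain ⟨k, hlt, hge⟩ := (hev1.and hev2).exists
    exact absurd hlt (not_lt.2 hge)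
  · rintro ⟨C, hC, hW⟩
    set k : ℕ := max k₀ (⌈2*C/(c'*c)⌉₊ + 1) with hkdef
    have hk0 : k₀ ≤ k := le_max_left _ _
    have hk1 : (1:ℝ) ≤ (k:ℝ) := by
      have : 1 ≤ k := le_trans (by omega) (le_max_right k₀ (⌈2*C/(c'*c)⌉₊ + 1))
      exact_mod_cast this
    have hkbig : 2*C/(c'*c) < (k:ℝ) := by
      have h5 : (2*C/(c'*c) : ℝ) ≤ (⌈2*C/(c'*c)⌉₊ : ℝ) := Nat.le_ceil _
      have h6 : (⌈2*C/(c'*c)⌉₊ + 1 : ℕ) ≤ k := le_max_right _ _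
      have h7 : ((⌈2*C/(c'*c)⌉₊ + 1 : ℕ) : ℝ) ≤ (k:ℝ) := by exact_mod_cast h6
      push_cast at h7
      linarith
    clear_value k
    obtain ⟨Θ, hΘm, hΘ0, hΘtop, hvol⟩ := main k hk0
    set f : (Fin n → ℝ) → ℝ := Θ.indicator fun _ => 1 with hf
    have hfm : Measurable f := measurable_const.indicator hΘm
    set l : ℝ := c' * ((2:ℝ) ^ (d*k))⁻¹ / 2 with hl
    have hlpos : 0 < l := by rw [hl]; positivity
    clear_value f l
    have hintf : Integrable f := by
      rw [hf]
      exact (integrable_indicator_iff hΘm).2 (integrableOn_const hΘtop.ne)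
    have hbound := hW f hfm hintf l hlpos
    have hI : (∫ x, |f x|) = (volume Θ).toReal := by
      have habs : (fun x => |f x|) = Θ.indicator fun _ => (1:ℝ) := by
        funext x; by_cases hx : x ∈ Θ <;> simp [hf, hx]
      rw [habs, integral_indicator hΘm, setIntegral_const, smul_eq_mul, mul_one]; rfl
    have harg : C * (∫ x, |f x|) / l = 2 * C / c' * 2 ^ (d*k) * (volume Θ).toReal := by
      rw [hI, hl]; field_simp
    have hrhs : ENNReal.ofReal (C * (∫ x, |f x|) / l) =
        ENNReal.ofReal (2 * C / c' * 2 ^ (d*k)) * volume Θ := by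
      rw [harg, ENNReal.ofReal_mul (by positivity), ENNReal.ofReal_toReal hΘtop.ne]
    have h1 : ENNReal.ofReal (c * (2:ℝ) ^ (d*k) * (k:ℝ) ^ d) * volume Θ ≤
        ENNReal.ofReal (2 * C / c' * 2 ^ (d*k)) * volume Θ :=
      (hvol.trans hbound).trans_eq hrhs
    have h2 := (ENNReal.mul_le_mul_iff_left hΘ0.ne' hΘtop.ne).1 h1
    have h3 : c * (2:ℝ) ^ (d*k) * (k:ℝ) ^ d ≤ 2 * C / c' * 2 ^ (d*k) :=
      (ENNReal.ofReal_le_ofReal_iff (by positivity)).1 h2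
    have hP : (0:ℝ) < (2:ℝ) ^ (d*k) := by positivity
    have h4 : c * (k:ℝ) ^ d ≤ 2 * C / c' := by
      have h3' : c * (k:ℝ) ^ d * 2 ^ (d*k) ≤ 2 * C / c' * 2 ^ (d*k) := by
        calc c * (k:ℝ) ^ d * 2 ^ (d*k) = c * 2 ^ (d*k) * (k:ℝ) ^ d := by ring
          _ ≤ _ := h3
      exact le_of_mul_le_mul_right h3' hP
    have hkd : (k:ℝ) ≤ (k:ℝ) ^ d := le_self_pow₀ hk1 (by omega)
    have : 2 * C / c' < c * (k:ℝ) := by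
      rw [div_lt_iff₀ hc'0]
      rw [div_lt_iff₀ (mul_pos hc'0 hc)] at hkbig
      have heq : (k:ℝ) * (c' * c) = c * (k:ℝ) * c' := by ring
      linarith only [hkbig, heq]
    have hck : c * (k:ℝ) ≤ c * (k:ℝ) ^ d := mul_le_mul_of_nonneg_left hkd hc.le
    linarith only [h4, hck, this]

end
end

section
/- Fix n ≥ 2 and α > 0. For k ∈ ℕ, k ≥ 1, let 𝔻_k := {2^{−j} : 0 ≤ j ≤ k} and define the family of rectangles 𝓡_k := { [0,s₁] × ⋯ × [0,s_{n−1}] × [0, α/(s₁·…·s_{n−1})] : s₁, …, s_{n−1} ∈ 𝔻_k }. Then the Lebesgue measure of the union of 𝓡_k satisfies |⋃𝓡_k| ≥ (1/(3·2^{n−2}))·k^{n−1}·α. -/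
open MeasureTheory Set Filter
open scoped ENNReal

noncomputable section

/-- Product of powers of two over a finset. -/
lemma two_zpow_prod {ι : Type*} (s : Finset ι) (f : ι → ℤ) :
    ∏ i ∈ s, (2 : ℝ) ^ f i = 2 ^ (∑ i ∈ s, f i) := by
  induction s using Finset.cons_induction with
  | empty => simp
  | cons i s hi ih =>
      rw [Finset.prod_cons, Finset.sum_cons, zpow_add₀ (two_ne_zero), ih]

/-- Lemma 1 of the paper. For `n ≥ 2`, `α > 0` and `k ≥ 1`,
`|⋃ 𝓡_k| ≥ (1/(3·2^{n-2})) k^{n-1} α`. -/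
theorem measure_sUnion_guzmanFamily_ge (n : ℕ) (hn : 2 ≤ n)
    (a : ℝ) (ha : 0 < a) (k : ℕ) (hk : 1 ≤ k) :
    ENNReal.ofReal (1 / (3 * 2 ^ (n - 2)) * (k : ℝ) ^ (n - 1) * a) ≤
      volume (⋃₀ guzmanFamily n hn a k) := by
  classical
  -- the index set of "slots"
  set F : Finset (Fin n) := Finset.univ.filter (fun i : Fin n => (i : ℕ) < n - 1) with hF
  have hFc : Finset.univ.filter (fun i : Fin n => ¬ (i : ℕ) < n - 1)
      = {(⟨n - 1, by omega⟩ : Fin n)} := by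
    ext i
    simp only [Finset.mem_filter, Finset.mem_univ, true_and, Finset.mem_singleton,
      Fin.ext_iff]
    constructor
    · intro h; have := i.isLt; omega
    · intro h; omega
  have hcardF : F.card = n - 1 := by
    have := Finset.card_filter_add_card_filter_not
      (s := (Finset.univ : Finset (Fin n))) (p := fun i : Fin n => (i : ℕ) < n - 1)
    rw [hFc] at this
    simp only [Finset.card_singleton, Finset.card_univ, Fintype.card_fin] at this
    rw [hF]
    omega
  -- extend a tuple `w` to all of `Fin n`
  set W : (Fin (n - 1) → Fin k) → Fin n → ℕ := fun w i =>
    if h : (i : ℕ) < n - 1 then (w ⟨i, h⟩ : ℕ) else 0 with hW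
  set S : (Fin (n - 1) → Fin k) → ℤ := fun w => ∑ i ∈ F, (W w i : ℤ) with hS
  -- the boxes
  set t : (Fin (n - 1) → Fin k) → Fin n → Set ℝ := fun w i =>
    if (i : ℕ) < n - 1 then
      Set.Ioc ((2 : ℝ) ^ (-(W w i : ℤ) - 1)) ((2 : ℝ) ^ (-(W w i : ℤ)))
    else Set.Ioc 0 (a * 2 ^ S w) with ht
  set B : (Fin (n - 1) → Fin k) → Set (Fin n → ℝ) := fun w => Set.univ.pi (t w) with hBdef
  have haS : ∀ w, 0 < a * 2 ^ S w := fun w => by positivity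
  -- each box lies in a rectangle of the family
  have hsub : (⋃ w, B w) ⊆ ⋃₀ guzmanFamily n hn a k := by
    refine Set.iUnion_subset fun w => ?_
    set s : Fin n → ℝ := fun i =>
      if (i : ℕ) < n - 1 then (2 : ℝ) ^ (-(W w i : ℤ)) else a * 2 ^ S w with hs
    have hmem : stdRect n s ∈ guzmanFamily n hn a k := by
      refine ⟨s, ?_, ?_, rfl⟩
      · intro i hi
        refine ⟨W w i, ?_, ?_⟩
        · have : W w i = (w ⟨i, hi⟩ : ℕ) := by simp [hW, hi]
          rw [this]; exact le_of_lt (w ⟨i, hi⟩).isLt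
        · simp [hs, hi]
      · have hlast : s ⟨n - 1, by omega⟩ = a * 2 ^ S w := by
          simp [hs]
        have hprod : ∏ i ∈ F, s i = (2 : ℝ) ^ (-S w) := by
          have h1 : ∏ i ∈ F, s i = ∏ i ∈ F, (2 : ℝ) ^ (-(W w i : ℤ)) := by
            refine Finset.prod_congr rfl fun i hi => ?_
            have hi' : (i : ℕ) < n - 1 := (Finset.mem_filter.1 hi).2
            simp [hs, hi']
          rw [h1, two_zpow_prod]
          congr 1
          rw [hS]
          simp
        rw [hlast, ← hF, hprod, zpow_neg]
        field_simp
    refine Set.Subset.trans ?_ (Set.subset_sUnion_of_mem hmem)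
    intro x hx
    intro i _
    have hxi := hx i (Set.mem_univ i)
    simp only [ht] at hxi
    simp only [hs]
    by_cases hi : (i : ℕ) < n - 1
    · rw [if_pos hi] at hxi ⊢
      exact ⟨le_of_lt (lt_of_le_of_lt (le_of_lt (by positivity)) hxi.1), hxi.2⟩
    · rw [if_neg hi] at hxi ⊢
      exact ⟨le_of_lt hxi.1, hxi.2⟩
  -- measurability
  have hmeas : ∀ w, MeasurableSet (B w) := by
    intro w
    refine MeasurableSet.univ_pi fun i => ?_
    simp only [ht]
    split_ifs <;> exact measurableSet_Ioc
  -- pairwise disjointness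
  have hdisj : Pairwise (Function.onFun Disjoint B) := by
    intro w w' hww
    simp only [Function.onFun]
    have : ∃ i' : Fin (n - 1), w i' ≠ w' i' := by
      by_contra h
      push_neg at h
      exact hww (funext h)
    obtain ⟨i', hi'⟩ := this
    set i : Fin n := ⟨(i' : ℕ), by omega⟩ with hidef
    have hilt : (i : ℕ) < n - 1 := i'.isLt
    have hWw : W w i = (w i' : ℕ) := by simp [hW, hilt, hidef]
    have hWw' : W w' i = (w' i' : ℕ) := by simp [hW, hilt, hidef]
    rw [Set.disjoint_left]
    intro x hxw hxw'
    have h1 := hxw i (Set.mem_univ i)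
    have h2 := hxw' i (Set.mem_univ i)
    simp only [ht, if_pos hilt, hWw, hWw'] at h1 h2
    have key : ∀ m₁ m₂ : ℕ, m₁ < m₂ →
        x i ∈ Set.Ioc ((2:ℝ) ^ (-(m₁:ℤ) - 1)) ((2:ℝ) ^ (-(m₁:ℤ))) →
        x i ∈ Set.Ioc ((2:ℝ) ^ (-(m₂:ℤ) - 1)) ((2:ℝ) ^ (-(m₂:ℤ))) → False := by
      intro m₁ m₂ hm hx1 hx2
      have : (2:ℝ) ^ (-(m₂:ℤ)) ≤ (2:ℝ) ^ (-(m₁:ℤ) - 1) :=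
        zpow_le_zpow_right₀ one_le_two (by omega)
      exact absurd (lt_of_lt_of_le hx1.1 (le_trans hx2.2 this)) (lt_irrefl _)
    rcases lt_or_gt_of_ne (fun h : (w i' : ℕ) = (w' i' : ℕ) => hi' (Fin.ext h)) with h | h
    · exact key _ _ h h1 h2
    · exact key _ _ h h2 h1
  -- volume of each box
  have hvol : ∀ w, volume (B w) = ENNReal.ofReal (a * 2 ^ (-((n:ℤ) - 1))) := by
    intro w
    rw [hBdef]
    rw [volume_pi_pi]
    have hlen : ∀ i, volume (t w i) = ENNReal.ofReal
        (if (i : ℕ) < n - 1 then (2:ℝ) ^ (-(W w i : ℤ) - 1) else a * 2 ^ S w) := by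
      intro i
      simp only [ht]
      split_ifs with hi
      · rw [Real.volume_Ioc]
        congr 1
        have : (2:ℝ) ^ (-(W w i : ℤ)) = 2 ^ (-(W w i : ℤ) - 1) * 2 := by
          rw [← zpow_add_one₀ (two_ne_zero)]; congr 1; ring
        rw [this]; ring
      · rw [Real.volume_Ioc]; ring_nf
    rw [Finset.prod_congr rfl (fun i _ => hlen i),
      ← ENNReal.ofReal_prod_of_nonneg (fun i _ => by split_ifs <;> positivity)]
    congr 1
    rw [Finset.prod_ite, ← hF, hFc, Finset.prod_const, Finset.card_singleton, pow_one]
    have hsum : ∏ i ∈ F, (2:ℝ) ^ (-(W w i : ℤ) - 1) = 2 ^ (-S w - ((n:ℤ) - 1)) := by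
      rw [two_zpow_prod]
      congr 1
      rw [Finset.sum_sub_distrib, Finset.sum_neg_distrib, Finset.sum_const, hcardF]
      have hcast : ((n - 1 : ℕ) : ℤ) = (n : ℤ) - 1 := by omega
      simp only [hS, nsmul_eq_mul, mul_one, hcast]
    rw [hsum]
    have : (2:ℝ) ^ (-S w - ((n:ℤ) - 1)) * 2 ^ (S w) = 2 ^ (-((n:ℤ) - 1)) := by
      rw [← zpow_add₀ (two_ne_zero)]; congr 1; ring
    calc (2:ℝ) ^ (-S w - ((n:ℤ) - 1)) * (a * 2 ^ S w)
        = a * ((2:ℝ) ^ (-S w - ((n:ℤ) - 1)) * 2 ^ (S w)) := by ring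
      _ = a * 2 ^ (-((n:ℤ) - 1)) := by rw [this]
  -- put everything together
  have hcard : Fintype.card (Fin (n - 1) → Fin k) = k ^ (n - 1) := by
    simp [Fintype.card_fun]
  have htsum : volume (⋃ w, B w)
      = (k : ℝ≥0∞) ^ (n - 1) * ENNReal.ofReal (a * 2 ^ (-((n:ℤ) - 1))) := by
    rw [measure_iUnion hdisj hmeas, tsum_fintype]
    simp only [hvol, Finset.sum_const, Finset.card_univ, hcard, nsmul_eq_mul]
    push_cast
    ring
  have hfinal : ENNReal.ofReal (1 / (3 * 2 ^ (n - 2)) * (k : ℝ) ^ (n - 1) * a)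
      ≤ (k : ℝ≥0∞) ^ (n - 1) * ENNReal.ofReal (a * 2 ^ (-((n:ℤ) - 1))) := by
    have hk' : ((k : ℝ≥0∞)) ^ (n - 1) = ENNReal.ofReal ((k : ℝ) ^ (n - 1)) := by
      rw [ENNReal.ofReal_pow (by positivity), ENNReal.ofReal_natCast]
    rw [hk', ← ENNReal.ofReal_mul (by positivity)]
    apply ENNReal.ofReal_le_ofReal
    have he : (2:ℝ) ^ (-((n:ℤ) - 1)) = ((2:ℝ) ^ (n - 1))⁻¹ := by
      rw [zpow_neg]
      congr 1
      have : ((n:ℤ) - 1) = ((n - 1 : ℕ) : ℤ) := by omega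
      rw [this, zpow_natCast]
    rw [he]
    have e2 : (2:ℝ) ^ (n - 1) = 2 * 2 ^ (n - 2) := by
      have h : n - 1 = (n - 2) + 1 := by omega
      rw [h, pow_succ]; ring
    have hP : (0:ℝ) < 2 ^ (n - 2) := by positivity
    have h1 : (1:ℝ) / (3 * 2 ^ (n - 2)) ≤ ((2:ℝ) ^ (n - 1))⁻¹ := by
      rw [e2, one_div, inv_le_inv₀ (by positivity) (by positivity)]
      linarith
    calc (1:ℝ) / (3 * 2 ^ (n - 2)) * (k : ℝ) ^ (n - 1) * a
        ≤ ((2:ℝ) ^ (n - 1))⁻¹ * (k : ℝ) ^ (n - 1) * a := by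
          gcongr
      _ = (k : ℝ) ^ (n - 1) * (a * ((2:ℝ) ^ (n - 1))⁻¹) := by ring
  calc ENNReal.ofReal (1 / (3 * 2 ^ (n - 2)) * (k : ℝ) ^ (n - 1) * a)
      ≤ (k : ℝ≥0∞) ^ (n - 1) * ENNReal.ofReal (a * 2 ^ (-((n:ℤ) - 1))) := hfinal
    _ = volume (⋃ w, B w) := htsum.symm
    _ ≤ volume (⋃₀ guzmanFamily n hn a k) := measure_mono hsub

end
end

section
/- Fix n ≥ 2. For each k ∈ ℕ let α_k := 2^{−nk}, 𝔻_k := {2^{−j} : 0 ≤ j ≤ k}, and 𝓡_k := { [0,s₁] × ⋯ × [0,s_{n−1}] × [0, α_k/(s₁·…·s_{n−1})] : s₁, …, s_{n−1} ∈ 𝔻_k }, and set 𝓡 := ⋃_{k∈ℕ} 𝓡_k. Then for every Orlicz function Φ satisfying Φ = o(Φ_{n−1}) at ∞, the maximal operator M_𝓡 does not satisfy a weak L^Φ inequality; in this sense de Guzmán's weak L log^{n−1} L estimate for M_𝓡 is optimal. -/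
open MeasureTheory Set Filter
open scoped ENNReal

noncomputable section

private lemma two_zpow_pos' (z : ℤ) : (0:ℝ) < 2 ^ z := zpow_pos (by norm_num) z

private lemma prod_two_zpow' {ι : Type*} (s : Finset ι) (f : ι → ℤ) :
    ∏ i ∈ s, (2:ℝ) ^ f i = 2 ^ (∑ i ∈ s, f i) := by
  classical
  induction s using Finset.cons_induction with
  | empty => simp
  | cons a s ha ih =>
      rw [Finset.prod_cons, Finset.sum_cons, zpow_add₀ (by norm_num : (2:ℝ) ≠ 0), ih]

set_option maxHeartbeats 2000000 in
/-- Theorem `thm.stokn2`. For `𝓡 = ⋃_k 𝓡_k` with `α_k = 2^{-nk}`,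
de Guzmán's weak `L log^{n-1} L` estimate is optimal: `M_𝓡` satisfies no weak `L^Φ`
inequality for any Orlicz function `Φ = o(Φ_{n-1})` at `∞`. -/
theorem guzman_sharp_for_guzmanFamily (n : ℕ) (hn : 2 ≤ n) :
    ∀ Φ : ℝ → ℝ, IsOrlicz Φ →
      Tendsto (fun t => Φ t / phiD (n - 1) t) atTop (nhds 0) →
      ¬ WeakOrlicz (⋃ k : ℕ, guzmanFamily n hn ((2 : ℝ) ^ (-((n : ℤ) * k))) k) Φ := by
  intro Φ hΦ hlim hW
  obtain ⟨hconv, hmono, hΦ0⟩ := hΦ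
  obtain ⟨C, hC, hweak⟩ := hW
  set 𝓡 := (⋃ k : ℕ, guzmanFamily n hn ((2 : ℝ) ^ (-((n : ℤ) * k))) k) with h𝓡
  set m := n - 1 with hm
  have hm1 : 1 ≤ m := by omega
  have hmn : m < n := by omega
  have hnm : n = m + 1 := by omega
  set N : ℝ := (n : ℝ) with hN
  have hN2 : (2:ℝ) ≤ N := by rw [hN]; exact_mod_cast hn
  have hN0 : (0:ℝ) < N := by linarith
  set ε : ℝ := (2:ℝ) ^ (-(m:ℤ)) / (8 * C * (2*N)^m) with hε
  have hεpos : 0 < ε := by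
    apply div_pos (two_zpow_pos' _)
    positivity
  have hev : ∀ᶠ t in atTop, Φ t / phiD m t < ε := hlim.eventually (gt_mem_nhds hεpos)
  obtain ⟨T, hT⟩ := eventually_atTop.mp hev
  obtain ⟨k, hk⟩ := exists_nat_ge (max (max 1 (Real.log C / Real.log 2)) (T / (2*C)))
  have hk1 : (1:ℝ) ≤ (k:ℝ) := le_trans (le_trans (le_max_left _ _) (le_max_left _ _)) hk
  have hk1' : 1 ≤ k := by exact_mod_cast hk1
  have hklog : Real.log C / Real.log 2 ≤ (k:ℝ) :=
    le_trans (le_trans (le_max_right _ _) (le_max_left _ _)) hk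
  have hkT : T / (2*C) ≤ (k:ℝ) := (le_max_right _ _).trans hk
  -- filter facts
  have hfilter_not :
      Finset.univ.filter (fun i : Fin n => ¬((i:ℕ) < m)) = {(⟨m, hmn⟩ : Fin n)} := by
    ext i
    simp only [Finset.mem_filter, Finset.mem_univ, true_and, Finset.mem_singleton]
    constructor
    · intro h; have := i.isLt; exact Fin.ext (show (i:ℕ) = m by omega)
    · intro h; subst h; simp
  have hfilter_card : (Finset.univ.filter (fun i : Fin n => (i:ℕ) < m)).card = m := by
    have h1 := Finset.card_filter_add_card_filter_not
      (s := (Finset.univ : Finset (Fin n))) (p := fun i : Fin n => (i:ℕ) < m)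
    rw [hfilter_not] at h1
    simp only [Finset.card_singleton, Finset.card_univ, Fintype.card_fin] at h1
    omega
  -- the set E and the function f
  set e : Fin n → ℝ := fun i =>
    if (i:ℕ) < m then (2:ℝ) ^ (-(k:ℤ)) else (2:ℝ) ^ (-((n*k : ℕ):ℤ)) with he
  set E : Set (Fin n → ℝ) := Set.univ.pi fun i => Icc 0 (e i) with hE
  have hEmeas : MeasurableSet E := MeasurableSet.univ_pi fun i => measurableSet_Icc
  set f : (Fin n → ℝ) → ℝ := E.indicator 1 with hf
  have hfmeas : Measurable f := measurable_one.indicator hEmeas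
  have hvolE : volume E = ENNReal.ofReal ((2:ℝ) ^ (-((m*k:ℕ):ℤ) - ((n*k:ℕ):ℤ))) := by
    rw [hE, volume_pi_pi]
    have h1 : ∀ i : Fin n, volume (Icc 0 (e i)) = ENNReal.ofReal (e i) := fun i => by
      rw [Real.volume_Icc, sub_zero]
    simp_rw [h1]
    rw [← ENNReal.ofReal_prod_of_nonneg (fun i _ => ?_)]
    · congr 1
      have h2 : ∀ i : Fin n, e i = (2:ℝ) ^ (if (i:ℕ) < m then -(k:ℤ) else -((n*k:ℕ):ℤ)) := by
        intro i; by_cases h : (i:ℕ) < m <;> simp [he, h]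
      rw [Finset.prod_congr rfl (fun i _ => h2 i), prod_two_zpow']
      congr 1
      rw [Finset.sum_ite, Finset.sum_const, Finset.sum_const, hfilter_card, hfilter_not,
        Finset.card_singleton]
      push_cast
      ring
    · rw [he]; dsimp only; split_ifs <;> exact (two_zpow_pos' _).le
  -- index data for the rectangles
  set Jf : (Fin m → Fin (k+1)) → Fin n → ℕ :=
    fun g i => if h : (i:ℕ) < m then (g ⟨(i:ℕ), h⟩ : ℕ) else 0 with hJf
  have hJle : ∀ g i, Jf g i ≤ k := by
    intro g i
    rw [hJf]; dsimp only
    split_ifs with h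
    · exact Fin.is_le _
    · exact Nat.zero_le _
  set Tf : (Fin m → Fin (k+1)) → ℤ :=
    fun g => ∑ i ∈ Finset.univ.filter (fun i : Fin n => (i:ℕ) < m), ((Jf g i : ℕ) : ℤ)
    with hTf
  have hT0 : ∀ g, 0 ≤ Tf g := fun g => Finset.sum_nonneg (fun i _ => Int.natCast_nonneg _)
  set sfun : (Fin m → Fin (k+1)) → Fin n → ℝ := fun g i =>
    if (i:ℕ) < m then (2:ℝ) ^ (-((Jf g i : ℕ):ℤ)) else (2:ℝ) ^ (Tf g - ((n*k:ℕ):ℤ))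
    with hsfun
  have hprod_filter : ∀ g, ∏ i ∈ Finset.univ.filter (fun i : Fin n => (i:ℕ) < m), sfun g i
      = (2:ℝ) ^ (-(Tf g)) := by
    intro g
    have h1 : ∀ i ∈ Finset.univ.filter (fun i : Fin n => (i:ℕ) < m),
        sfun g i = (2:ℝ) ^ (-((Jf g i : ℕ):ℤ)) := by
      intro i hi
      rw [Finset.mem_filter] at hi
      rw [hsfun]; dsimp only; rw [if_pos hi.2]
    rw [Finset.prod_congr rfl h1, prod_two_zpow']
    congr 1
    rw [hTf]
    dsimp only
    rw [← Finset.sum_neg_distrib]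
  have hmemR : ∀ g, stdRect n (sfun g) ∈ 𝓡 := by
    intro g
    rw [h𝓡]
    refine Set.mem_iUnion.mpr ⟨k, ⟨sfun g, ?_, ?_, rfl⟩⟩
    · intro i hi
      rw [← hm] at hi
      refine ⟨Jf g i, hJle g i, ?_⟩
      rw [hsfun]; dsimp only; rw [if_pos hi]
    · have hval : ((⟨n - 1, by omega⟩ : Fin n) : ℕ) = m := rfl
      have hnot : ¬(((⟨n - 1, by omega⟩ : Fin n) : ℕ) < m) := by rw [hval]; omega
      rw [hsfun]; dsimp only; rw [if_neg hnot]
      have hfeq : (Finset.univ.filter (fun i : Fin n => (i:ℕ) < n - 1))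
          = Finset.univ.filter (fun i : Fin n => (i:ℕ) < m) := by rw [← hm]
      rw [hfeq, hprod_filter g]
      rw [eq_div_iff (by exact (two_zpow_pos' _).ne')]
      rw [← zpow_add₀ (by norm_num : (2:ℝ) ≠ 0)]
      congr 1
      push_cast
      ring
  have hvolR : ∀ g, volume (stdRect n (sfun g)) = ENNReal.ofReal ((2:ℝ) ^ (-((n*k:ℕ):ℤ))) := by
    intro g
    rw [stdRect, volume_pi_pi]
    have h1 : ∀ i : Fin n, volume (Icc 0 (sfun g i)) = ENNReal.ofReal (sfun g i) := fun i => by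
      rw [Real.volume_Icc, sub_zero]
    simp_rw [h1]
    rw [← ENNReal.ofReal_prod_of_nonneg (fun i _ => ?_)]
    · congr 1
      rw [← Finset.prod_filter_mul_prod_filter_not Finset.univ (fun i : Fin n => (i:ℕ) < m),
        hprod_filter g, hfilter_not, Finset.prod_singleton]
      have hnot : ¬(((⟨m, hmn⟩ : Fin n) : ℕ) < m) := by simp
      rw [hsfun]; dsimp only; rw [if_neg hnot]
      rw [← zpow_add₀ (by norm_num : (2:ℝ) ≠ 0)]
      congr 1
      ring
    · rw [hsfun]; dsimp only; split_ifs <;> exact (two_zpow_pos' _).le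
  -- E is contained in each rectangle
  have hEsub : ∀ g, E ⊆ stdRect n (sfun g) := by
    intro g
    rw [hE, stdRect]
    refine Set.pi_mono fun i _ => ?_
    apply Icc_subset_Icc_right
    rw [he, hsfun]; dsimp only
    by_cases h : (i:ℕ) < m
    · rw [if_pos h, if_pos h]
      apply zpow_le_zpow_right₀ (by norm_num : (1:ℝ) ≤ 2)
      have := hJle g i; omega
    · rw [if_neg h, if_neg h]
      apply zpow_le_zpow_right₀ (by norm_num : (1:ℝ) ≤ 2)
      have := hT0 g; omega
  -- the disjoint small boxes
  set D : (Fin m → Fin (k+1)) → Set (Fin n → ℝ) := fun g => Set.univ.pi fun i =>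
    if (i:ℕ) < m then Ioc ((2:ℝ) ^ (-((Jf g i:ℕ):ℤ) - 1)) ((2:ℝ) ^ (-((Jf g i:ℕ):ℤ)))
    else Icc 0 ((2:ℝ) ^ (Tf g - ((n*k:ℕ):ℤ))) with hD
  have hDmeas : ∀ g, MeasurableSet (D g) := by
    intro g
    rw [hD]
    exact MeasurableSet.univ_pi fun i => by
      split_ifs
      · exact measurableSet_Ioc
      · exact measurableSet_Icc
  have hDsub : ∀ g, D g ⊆ stdRect n (sfun g) := by
    intro g
    rw [hD, stdRect]
    refine Set.pi_mono fun i _ => ?_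
    rw [hsfun]; dsimp only
    by_cases h : (i:ℕ) < m
    · rw [if_pos h, if_pos h]
      intro y hy
      exact ⟨le_of_lt (lt_of_le_of_lt (two_zpow_pos' _).le hy.1), hy.2⟩
    · rw [if_neg h, if_neg h]
  have hdisj : Pairwise (Function.onFun Disjoint D) := by
    intro g g' hgg'
    obtain ⟨l, hl⟩ : ∃ l, g l ≠ g' l := by
      by_contra h; push_neg at h; exact hgg' (funext h)
    have hln : (l:ℕ) < n := lt_trans l.isLt hmn
    have key : ∀ (a b : ℕ), a < b → ∀ y : ℝ,
        y ∈ Ioc ((2:ℝ) ^ (-(a:ℤ) - 1)) ((2:ℝ) ^ (-(a:ℤ))) →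
        y ∈ Ioc ((2:ℝ) ^ (-(b:ℤ) - 1)) ((2:ℝ) ^ (-(b:ℤ))) → False := by
      intro a b hab y hy1 hy2
      have h1 : (2:ℝ) ^ (-(b:ℤ)) ≤ (2:ℝ) ^ (-(a:ℤ) - 1) :=
        zpow_le_zpow_right₀ (by norm_num) (by omega)
      have h2 := hy1.1
      have h3 := hy2.2
      linarith
    rw [Function.onFun, Set.disjoint_left]
    intro x hxg hxg'
    rw [hD] at hxg hxg'
    have h1 := Set.mem_univ_pi.mp hxg ⟨(l:ℕ), hln⟩
    have h2 := Set.mem_univ_pi.mp hxg' ⟨(l:ℕ), hln⟩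
    have hcond : ((⟨(l:ℕ), hln⟩ : Fin n) : ℕ) < m := l.isLt
    rw [if_pos hcond] at h1 h2
    have hJg : Jf g ⟨(l:ℕ), hln⟩ = (g l : ℕ) := by
      rw [hJf]; dsimp only; rw [dif_pos hcond]
    have hJg' : Jf g' ⟨(l:ℕ), hln⟩ = (g' l : ℕ) := by
      rw [hJf]; dsimp only; rw [dif_pos hcond]
    rw [hJg] at h1
    rw [hJg'] at h2
    have hne : (g l : ℕ) ≠ (g' l : ℕ) := fun h => hl (Fin.ext h)
    rcases lt_or_gt_of_ne hne with h | h
    · exact key _ _ h _ h1 h2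
    · exact key _ _ h _ h2 h1
  have hvolD : ∀ g, volume (D g)
      = ENNReal.ofReal ((2:ℝ) ^ (-(m:ℤ) - ((n*k:ℕ):ℤ))) := by
    intro g
    rw [hD, volume_pi_pi]
    have hlen : ∀ i : Fin n,
        volume (if (i:ℕ) < m then Ioc ((2:ℝ) ^ (-((Jf g i:ℕ):ℤ) - 1)) ((2:ℝ) ^ (-((Jf g i:ℕ):ℤ)))
          else Icc 0 ((2:ℝ) ^ (Tf g - ((n*k:ℕ):ℤ))))
        = ENNReal.ofReal ((2:ℝ) ^ (if (i:ℕ) < m then (-((Jf g i:ℕ):ℤ) - 1)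
            else (Tf g - ((n*k:ℕ):ℤ)))) := by
      intro i
      by_cases h : (i:ℕ) < m
      · rw [if_pos h, if_pos h, Real.volume_Ioc]
        congr 1
        have h2 : (2:ℝ) ^ (-((Jf g i:ℕ):ℤ)) = 2 ^ (-((Jf g i:ℕ):ℤ) - 1) * 2 := by
          rw [show -((Jf g i:ℕ):ℤ) = (-((Jf g i:ℕ):ℤ) - 1) + 1 by ring,
            zpow_add₀ (by norm_num : (2:ℝ) ≠ 0), zpow_one]
          ring_nf
        rw [h2]; ring
      · rw [if_neg h, if_neg h, Real.volume_Icc, sub_zero]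
    simp_rw [hlen]
    rw [← ENNReal.ofReal_prod_of_nonneg (fun i _ => (two_zpow_pos' _).le), prod_two_zpow']
    congr 1
    rw [Finset.sum_ite, hfilter_not, Finset.sum_singleton]
    have h3 : ∑ i ∈ Finset.univ.filter (fun i : Fin n => (i:ℕ) < m),
        (-((Jf g i:ℕ):ℤ) - 1) = -(Tf g) - m := by
      rw [Finset.sum_sub_distrib, Finset.sum_neg_distrib, Finset.sum_const, hfilter_card,
        nsmul_eq_mul, mul_one]
    rw [h3]
    ring
  -- the threshold
  set lam : ℝ := (2:ℝ) ^ (-((m*k:ℕ):ℤ) - 1) with hlam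
  have hlam0 : 0 < lam := two_zpow_pos' _
  -- pointwise lower bound for the maximal function on D g
  have hkey : ∀ g, ∀ x ∈ D g, ENNReal.ofReal lam < maximalFn 𝓡 f x := by
    intro g x hx
    have hxR : x ∈ stdRect n (sfun g) := hDsub g hx
    have himg : (fun y => (0 : Fin n → ℝ) + y) '' (stdRect n (sfun g)) = stdRect n (sfun g) := by
      have h0 : (fun y => (0 : Fin n → ℝ) + y) = id := funext fun y => zero_add y
      rw [h0, Set.image_id]
    have hxI : x ∈ (fun y => (0 : Fin n → ℝ) + y) '' (stdRect n (sfun g)) := himg.symm ▸ hxR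
    have hIntEq : (∫⁻ y in (fun y => (0 : Fin n → ℝ) + y) '' (stdRect n (sfun g)),
        ENNReal.ofReal |f y|) = volume E := by
      rw [himg]
      have h1 : ∀ y, ENNReal.ofReal |f y| = E.indicator (fun _ => (1:ℝ≥0∞)) y := by
        intro y
        by_cases hy : y ∈ E
        · simp [hf, hy]
        · simp [hf, hy]
      rw [lintegral_congr h1, lintegral_indicator hEmeas, Measure.restrict_restrict hEmeas,
        setLIntegral_one, Set.inter_eq_left.mpr (hEsub g)]
    have hterm : ENNReal.ofReal lam <
        (∫⁻ y in (fun y => (0 : Fin n → ℝ) + y) '' (stdRect n (sfun g)),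
          ENNReal.ofReal |f y|) / volume (stdRect n (sfun g)) := by
      rw [hIntEq, hvolE, hvolR g, ← ENNReal.ofReal_div_of_pos (two_zpow_pos' _)]
      have hquot : (2:ℝ) ^ (-((m*k:ℕ):ℤ) - ((n*k:ℕ):ℤ)) / 2 ^ (-((n*k:ℕ):ℤ))
          = 2 ^ (-((m*k:ℕ):ℤ)) := by
        rw [← zpow_sub₀ (by norm_num : (2:ℝ) ≠ 0)]
        congr 1; ring
      rw [hquot]
      rw [ENNReal.ofReal_lt_ofReal_iff (two_zpow_pos' _)]
      rw [hlam]
      exact zpow_lt_zpow_right₀ (by norm_num) (by omega)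
    refine lt_of_lt_of_le hterm ?_
    rw [maximalFn]
    exact le_iSup_of_le (stdRect n (sfun g)) (le_iSup_of_le (hmemR g)
      (le_iSup_of_le 0 (le_iSup_of_le hxI le_rfl)))
  -- lower bound for the measure of the superlevel set
  have hUnion : ENNReal.ofReal (((k:ℝ)+1)^m * (2:ℝ)^(-(m:ℤ) - ((n*k:ℕ):ℤ)))
      ≤ volume {x | ENNReal.ofReal lam < maximalFn 𝓡 f x} := by
    have hsub : (⋃ g, D g) ⊆ {x | ENNReal.ofReal lam < maximalFn 𝓡 f x} :=
      Set.iUnion_subset (fun g x hx => hkey g x hx)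
    have h1 : volume (⋃ g, D g)
        = ENNReal.ofReal (((k:ℝ)+1)^m * (2:ℝ)^(-(m:ℤ) - ((n*k:ℕ):ℤ))) := by
      rw [measure_iUnion hdisj hDmeas, tsum_fintype]
      simp_rw [hvolD]
      rw [Finset.sum_const, Finset.card_univ, Fintype.card_fun, Fintype.card_fin,
        Fintype.card_fin, nsmul_eq_mul, ← ENNReal.ofReal_natCast,
        ← ENNReal.ofReal_mul (by positivity)]
      congr 1
      push_cast
      ring
    calc ENNReal.ofReal (((k:ℝ)+1)^m * (2:ℝ)^(-(m:ℤ) - ((n*k:ℕ):ℤ)))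
        = volume (⋃ g, D g) := h1.symm
      _ ≤ _ := measure_mono hsub
  -- integrability of Φ ∘ |f|
  have hInt : Integrable (fun x => Φ |f x|) := by
    have h1 : (fun x => Φ |f x|) = E.indicator (fun _ => Φ 1) := by
      funext x
      by_cases hx : x ∈ E
      · rw [Set.indicator_of_mem hx, hf, Set.indicator_of_mem hx]
        norm_num
      · rw [Set.indicator_of_notMem hx, hf, Set.indicator_of_notMem hx]
        rw [abs_zero, hΦ0]
    rw [h1, integrable_indicator_iff hEmeas]
    refine (integrableOn_const_iff (C := Φ 1)).mpr (Or.inr ?_)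
    rw [hvolE]
    exact ENNReal.ofReal_lt_top
  -- the value t₀ = C / lam
  set t₀ : ℝ := C * (2:ℝ) ^ (((m*k:ℕ):ℤ) + 1) with ht₀
  have ht₀pos : 0 < t₀ := mul_pos hC (two_zpow_pos' _)
  have hΦt₀ : 0 ≤ Φ t₀ := by
    have h1 := hmono Set.self_mem_Ici (Set.mem_Ici.mpr ht₀pos.le) ht₀pos.le
    rw [hΦ0] at h1; exact h1
  have hCdiv : C / lam = t₀ := by
    rw [hlam, ht₀, div_eq_mul_inv, ← zpow_neg]
    congr 1
    ring
  -- the right-hand side of the weak inequality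
  have hRHS : (∫⁻ x, ENNReal.ofReal (Φ (C * |f x| / lam)))
      = ENNReal.ofReal (Φ t₀ * (2:ℝ) ^ (-((m*k:ℕ):ℤ) - ((n*k:ℕ):ℤ))) := by
    have h1 : (fun x => ENNReal.ofReal (Φ (C * |f x| / lam)))
        = E.indicator (fun _ => ENNReal.ofReal (Φ t₀)) := by
      funext x
      by_cases hx : x ∈ E
      · have hfx : f x = 1 := by rw [hf, Set.indicator_of_mem hx]; rfl
        rw [hfx, Set.indicator_of_mem hx, abs_one, mul_one]
        all_goals rw [hCdiv]
      · have hfx : f x = 0 := by rw [hf, Set.indicator_of_notMem hx]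
        rw [hfx, Set.indicator_of_notMem hx, abs_zero, mul_zero, zero_div, hΦ0]
        exact ENNReal.ofReal_zero
    rw [h1, lintegral_indicator_const hEmeas, hvolE, ← ENNReal.ofReal_mul hΦt₀]
  -- apply the weak inequality
  have hw := hweak f hfmeas hInt lam hlam0
  rw [hRHS] at hw
  have hmain : ((k:ℝ)+1)^m * (2:ℝ)^(-(m:ℤ) - ((n*k:ℕ):ℤ))
      ≤ Φ t₀ * (2:ℝ)^(-((m*k:ℕ):ℤ) - ((n*k:ℕ):ℤ)) :=
    (ENNReal.ofReal_le_ofReal_iff (mul_nonneg hΦt₀ (two_zpow_pos' _).le)).mp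
      (le_trans hUnion hw)
  -- T ≤ t₀
  have hkpow : (k:ℝ) < (2:ℝ) ^ ((m*k:ℕ):ℤ) := by
    have h1 : k < 2 ^ (m*k) :=
      lt_of_lt_of_le (Nat.lt_two_pow_self (n := k))
        (Nat.pow_le_pow_right (by norm_num) (Nat.le_mul_of_pos_left k (by omega)))
    calc (k:ℝ) < ((2^(m*k) : ℕ) : ℝ) := by exact_mod_cast h1
      _ = (2:ℝ) ^ ((m*k:ℕ):ℤ) := by rw [zpow_natCast]; push_cast; ring
  have hTt₀ : T ≤ t₀ := by
    have h1 : T ≤ 2*C*k := by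
      rw [div_le_iff₀ (by positivity)] at hkT; linarith
    have h2 : t₀ = 2*C*(2:ℝ)^((m*k:ℕ):ℤ) := by
      rw [ht₀, zpow_add₀ (by norm_num : (2:ℝ) ≠ 0), zpow_one]; ring
    nlinarith [mul_lt_mul_of_pos_left hkpow (by positivity : (0:ℝ) < 2*C)]
  -- Φ t₀ ≤ ε · phiD m t₀
  have hph : 0 < phiD m t₀ := by
    rw [phiD]
    have h1 : (0:ℝ) ≤ max (Real.log t₀) 0 ^ m := pow_nonneg (le_max_right _ _) m
    nlinarith [ht₀pos]
  have hΦle : Φ t₀ ≤ ε * phiD m t₀ := le_of_lt ((div_lt_iff₀ hph).mp (hT t₀ hTt₀))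
  -- bound for phiD m t₀
  have hlog2pos : (0:ℝ) < Real.log 2 := Real.log_pos (by norm_num)
  have hlog2le : Real.log 2 ≤ 1 := by
    have := Real.log_le_sub_one_of_pos (by norm_num : (0:ℝ) < 2)
    linarith
  have hlogC : Real.log C ≤ k * Real.log 2 := by
    rw [div_le_iff₀ hlog2pos] at hklog; linarith
  have hm1' : (1:ℝ) ≤ (m:ℝ) := by exact_mod_cast hm1
  have hNm : N = (m:ℝ) + 1 := by rw [hN, hnm]; push_cast; ring
  have hlogt₀ : Real.log t₀ ≤ 2*N*k := by
    rw [ht₀, Real.log_mul (ne_of_gt hC) (ne_of_gt (two_zpow_pos' _)), Real.log_zpow]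
    push_cast
    have e1 : (1:ℝ) ≤ (m:ℝ)*(k:ℝ) := by nlinarith
    calc Real.log C + ((m:ℝ)*(k:ℝ) + 1) * Real.log 2
        ≤ (k:ℝ) * Real.log 2 + ((m:ℝ)*(k:ℝ) + 1) * Real.log 2 := by linarith
      _ = ((m:ℝ)*(k:ℝ) + (k:ℝ) + 1) * Real.log 2 := by ring
      _ ≤ ((m:ℝ)*(k:ℝ) + (k:ℝ) + 1) * 1 := by
          apply mul_le_mul_of_nonneg_left hlog2le
          nlinarith
      _ ≤ 2*N*k := by rw [hNm]; nlinarith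
  have hmax : max (Real.log t₀) 0 ≤ 2*N*(k:ℝ) := max_le hlogt₀ (by positivity)
  have h2Nk1 : (1:ℝ) ≤ 2*N*(k:ℝ) := by nlinarith
  have h1le : (1:ℝ) ≤ (2*N*(k:ℝ))^m := one_le_pow₀ h2Nk1
  have hpowmax : max (Real.log t₀) 0 ^ m ≤ (2*N*(k:ℝ))^m :=
    pow_le_pow_left₀ (le_max_right _ _) hmax m
  have hphiD : phiD m t₀ ≤ t₀ * (2 * (2*N*(k:ℝ))^m) := by
    rw [phiD]
    exact mul_le_mul_of_nonneg_left (by linarith) ht₀pos.le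
  have hΦb : Φ t₀ ≤ ε * (t₀ * (2 * (2*N*(k:ℝ))^m)) :=
    hΦle.trans (mul_le_mul_of_nonneg_left hphiD hεpos.le)
  -- final computation
  have id1 : (2:ℝ)^(-(m:ℤ) - ((n*k:ℕ):ℤ)) = 2^(-(m:ℤ)) * 2^(-((n*k:ℕ):ℤ)) := by
    rw [sub_eq_add_neg, zpow_add₀ (by norm_num : (2:ℝ) ≠ 0)]
  have id2 : (2:ℝ)^(((m*k:ℕ):ℤ)+1) * 2^(-((m*k:ℕ):ℤ) - ((n*k:ℕ):ℤ))
      = 2 * 2^(-((n*k:ℕ):ℤ)) := by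
    rw [← zpow_add₀ (by norm_num : (2:ℝ) ≠ 0),
      show ((m*k:ℕ):ℤ)+1 + (-((m*k:ℕ):ℤ) - ((n*k:ℕ):ℤ)) = 1 + (-((n*k:ℕ):ℤ)) by ring,
      zpow_add₀ (by norm_num : (2:ℝ) ≠ 0), zpow_one]
  have hstep : (((k:ℝ)+1)^m * 2^(-(m:ℤ))) * 2^(-((n*k:ℕ):ℤ))
      ≤ (4*ε*C*(2*N*(k:ℝ))^m) * 2^(-((n*k:ℕ):ℤ)) := by
    calc (((k:ℝ)+1)^m * 2^(-(m:ℤ))) * 2^(-((n*k:ℕ):ℤ))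
        = ((k:ℝ)+1)^m * (2:ℝ)^(-(m:ℤ) - ((n*k:ℕ):ℤ)) := by rw [id1]; ring
      _ ≤ Φ t₀ * (2:ℝ)^(-((m*k:ℕ):ℤ) - ((n*k:ℕ):ℤ)) := hmain
      _ ≤ (ε * (t₀ * (2 * (2*N*(k:ℝ))^m))) * (2:ℝ)^(-((m*k:ℕ):ℤ) - ((n*k:ℕ):ℤ)) :=
          mul_le_mul_of_nonneg_right hΦb (two_zpow_pos' _).le
      _ = (ε * C * (2 * (2*N*(k:ℝ))^m))
            * ((2:ℝ)^(((m*k:ℕ):ℤ)+1) * 2^(-((m*k:ℕ):ℤ) - ((n*k:ℕ):ℤ))) := by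
          rw [ht₀]; ring
      _ = (ε * C * (2 * (2*N*(k:ℝ))^m)) * (2 * 2^(-((n*k:ℕ):ℤ))) := by rw [id2]
      _ = (4*ε*C*(2*N*(k:ℝ))^m) * 2^(-((n*k:ℕ):ℤ)) := by ring
  have hstep2 : ((k:ℝ)+1)^m * 2^(-(m:ℤ)) ≤ 4*ε*C*(2*N*(k:ℝ))^m :=
    le_of_mul_le_mul_right hstep (two_zpow_pos' _)
  have hkk : (k:ℝ)^m ≤ ((k:ℝ)+1)^m := pow_le_pow_left₀ (by positivity) (by linarith) m
  have hkp : (0:ℝ) < ((k:ℝ)+1)^m := by positivity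
  have hfin : (2:ℝ)^(-(m:ℤ)) ≤ 4*ε*C*(2*N)^m := by
    have h4 : 4*ε*C*(2*N*(k:ℝ))^m ≤ (4*ε*C*(2*N)^m) * ((k:ℝ)+1)^m := by
      rw [mul_pow]
      calc 4*ε*C*((2*N)^m * (k:ℝ)^m) = (4*ε*C*(2*N)^m) * (k:ℝ)^m := by ring
        _ ≤ (4*ε*C*(2*N)^m) * ((k:ℝ)+1)^m := by
            apply mul_le_mul_of_nonneg_left hkk
            positivity
    have h6 : (2:ℝ)^(-(m:ℤ)) * ((k:ℝ)+1)^m ≤ (4*ε*C*(2*N)^m) * ((k:ℝ)+1)^m := by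
      calc (2:ℝ)^(-(m:ℤ)) * ((k:ℝ)+1)^m = ((k:ℝ)+1)^m * 2^(-(m:ℤ)) := by ring
        _ ≤ 4*ε*C*(2*N*(k:ℝ))^m := hstep2
        _ ≤ (4*ε*C*(2*N)^m) * ((k:ℝ)+1)^m := h4
    exact le_of_mul_le_mul_right h6 hkp
  have h2Nne : ((2*N)^m : ℝ) ≠ 0 := by positivity
  have hεval : 4*ε*C*(2*N)^m = (2:ℝ)^(-(m:ℤ))/2 := by
    rw [hε]
    field_simp
    ring
  rw [hεval] at hfin
  have hpos := two_zpow_pos' (-(m:ℤ))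
  linarith


end
end

section
/- Fix n ≥ 2. For each k ∈ ℕ let α_k := 2^{−nk}, 𝔻_k := {2^{−j} : 0 ≤ j ≤ k}, and 𝓡_k := { [0,s₁] × ⋯ × [0,s_{n−1}] × [0, α_k/(s₁·…·s_{n−1})] : s₁, …, s_{n−1} ∈ 𝔻_k }, and set 𝓡 := ⋃_{k∈ℕ} 𝓡_k. Then for each k ∈ ℕ there exist measurable sets Θ_k ⊆ Y_k ⊆ [0,1]^n with 0 < |Θ_k|, such that |Y_k| ≥ (1/(3·2^{n−2}))·2^{(n−1)k} k^{n−1} |Θ_k| and M_𝓡 χ_{Θ_k}(x) ≥ 2^{(1−n)k} for every x ∈ Y_k. -/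
open MeasureTheory Set Filter
open scoped ENNReal

noncomputable section

namespace GuzmanAux

lemma two_zpow_sum {ι : Type*} (s : Finset ι) (e : ι → ℤ) :
    (2:ℝ) ^ (∑ i ∈ s, e i) = ∏ i ∈ s, (2:ℝ) ^ (e i) := by
  classical
  induction s using Finset.induction with
  | empty => simp
  | insert a s h ih =>
      rw [Finset.sum_insert h, Finset.prod_insert h,
        zpow_add₀ (by norm_num : (2:ℝ) ≠ 0), ih]

lemma volume_stdRect (n : ℕ) (α : Fin n → ℝ) (h : ∀ i, 0 ≤ α i) :
    volume (stdRect n α) = ENNReal.ofReal (∏ i, α i) := by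
  rw [stdRect, volume_pi_pi,
    ENNReal.ofReal_prod_of_nonneg (fun i _ => h i)]
  simp [Real.volume_Icc]

variable (m k : ℕ)

lemma filter_last :
    Finset.univ.filter (fun i : Fin (m+2) => ¬ (i:ℕ) < m+1) = {⟨m+1, by omega⟩} := by
  ext i
  have := i.isLt
  simp [Fin.ext_iff]
  omega

lemma card_filter :
    (Finset.univ.filter (fun i : Fin (m+2) => (i:ℕ) < m+1)).card = m+1 := by
  have h := Finset.card_filter_add_card_filter_not
    (s := (Finset.univ : Finset (Fin (m+2)))) (p := fun i : Fin (m+2) => (i:ℕ) < m+1)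
  rw [filter_last] at h
  simp at h ⊢
  omega

lemma sum_split (e : Fin (m+2) → ℤ) :
    ∑ i, e i =
      (∑ i ∈ Finset.univ.filter (fun i : Fin (m+2) => (i:ℕ) < m+1), e i)
        + e ⟨m+1, by omega⟩ := by
  rw [← Finset.sum_filter_add_sum_filter_not Finset.univ
    (fun i : Fin (m+2) => (i:ℕ) < m+1), filter_last, Finset.sum_singleton]

/-- Sum of the first `m+1` levels. -/
def gS (j : Fin (m+2) → ℕ) : ℤ :=
  ∑ i ∈ Finset.univ.filter (fun i : Fin (m+2) => (i:ℕ) < m+1), (j i : ℤ)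

/-- Sides of the rectangle `R_j`. -/
def gSide (j : Fin (m+2) → ℕ) : Fin (m+2) → ℝ := fun i =>
  if (i:ℕ) < m+1 then (2:ℝ) ^ (-(j i : ℤ))
  else (2:ℝ) ^ (-((m+2 : ℤ) * k) + gS m j)

/-- Sides of `Θ`. -/
def θside : Fin (m+2) → ℝ := fun i =>
  if (i:ℕ) < m+1 then (2:ℝ) ^ (-(k : ℤ)) else (2:ℝ) ^ (-((m+2 : ℤ) * k))

lemma gS_nonneg (j : Fin (m+2) → ℕ) : 0 ≤ gS m j :=
  Finset.sum_nonneg fun i _ => Int.ofNat_nonneg _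

lemma gS_le (j : Fin (m+2) → ℕ) (hj : ∀ i : Fin (m+2), (i:ℕ) < m+1 → j i ≤ k) :
    gS m j ≤ (m+1 : ℤ) * k := by
  have : gS m j ≤ ∑ _i ∈ Finset.univ.filter (fun i : Fin (m+2) => (i:ℕ) < m+1), (k:ℤ) := by
    refine Finset.sum_le_sum fun i hi => ?_
    exact_mod_cast hj i (by simpa using hi)
  rw [Finset.sum_const, card_filter m, nsmul_eq_mul] at this
  push_cast at this
  linarith

lemma gSide_pos (j : Fin (m+2) → ℕ) (i : Fin (m+2)) : 0 < gSide m k j i := by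
  unfold gSide; split <;> positivity

lemma gSide_le_one (j : Fin (m+2) → ℕ) (hj : ∀ i : Fin (m+2), (i:ℕ) < m+1 → j i ≤ k)
    (i : Fin (m+2)) : gSide m k j i ≤ 1 := by
  unfold gSide; split
  · exact zpow_le_one_of_nonpos₀ one_le_two (by simp)
  · refine zpow_le_one_of_nonpos₀ one_le_two ?_
    have h1 := gS_le m k j hj
    have h2 : ((m:ℤ)+1) * k ≤ ((m:ℤ)+2) * k := by
      have : (0:ℤ) ≤ k := Int.ofNat_nonneg k
      nlinarith
    linarith

lemma prod_gSide_filter (j : Fin (m+2) → ℕ) :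
    ∏ i ∈ Finset.univ.filter (fun i : Fin (m+2) => (i:ℕ) < m+1), gSide m k j i
      = (2:ℝ) ^ (-(gS m j)) := by
  have : -(gS m j) = ∑ i ∈ Finset.univ.filter (fun i : Fin (m+2) => (i:ℕ) < m+1),
      (-(j i : ℤ)) := by
    simp [gS]
  rw [this, two_zpow_sum]
  refine Finset.prod_congr rfl fun i hi => ?_
  simp only [Finset.mem_filter] at hi
  simp [gSide, hi.2]

lemma prod_gSide_univ (j : Fin (m+2) → ℕ) :
    ∏ i, gSide m k j i = (2:ℝ) ^ (-((m+2 : ℤ) * k)) := by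
  rw [← Finset.prod_filter_mul_prod_filter_not Finset.univ
    (fun i : Fin (m+2) => (i:ℕ) < m+1), prod_gSide_filter, filter_last,
    Finset.prod_singleton]
  have h2 : gSide m k j ⟨m+1, by omega⟩ = (2:ℝ) ^ (-((m+2 : ℤ) * k) + gS m j) := by
    simp [gSide]
  rw [h2, ← zpow_add₀ (by norm_num : (2:ℝ) ≠ 0)]
  ring_nf

lemma prod_θside :
    ∏ i, θside m k i = (2:ℝ) ^ (-((m+1 : ℤ) * k) + -((m+2 : ℤ) * k)) := by
  rw [← Finset.prod_filter_mul_prod_filter_not Finset.univ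
    (fun i : Fin (m+2) => (i:ℕ) < m+1), filter_last, Finset.prod_singleton]
  have h1 : ∏ i ∈ Finset.univ.filter (fun i : Fin (m+2) => (i:ℕ) < m+1), θside m k i
      = (2:ℝ) ^ (-((m+1 : ℤ) * k)) := by
    have : -((m+1 : ℤ) * k) = ∑ i ∈ Finset.univ.filter
        (fun i : Fin (m+2) => (i:ℕ) < m+1), (-(k : ℤ)) := by
      rw [Finset.sum_const, card_filter m]
      push_cast
      ring
    rw [this, two_zpow_sum]
    refine Finset.prod_congr rfl fun i hi => ?_
    simp only [Finset.mem_filter] at hi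
    simp [θside, hi.2]
  rw [h1]
  have h2 : θside m k ⟨m+1, by omega⟩ = (2:ℝ) ^ (-((m+2 : ℤ) * k)) := by simp [θside]
  rw [h2, ← zpow_add₀ (by norm_num : (2:ℝ) ≠ 0)]

lemma theta_subset (j : Fin (m+2) → ℕ) (hj : ∀ i : Fin (m+2), (i:ℕ) < m+1 → j i ≤ k) :
    stdRect (m+2) (θside m k) ⊆ stdRect (m+2) (gSide m k j) := by
  refine Set.pi_mono fun i _ => Set.Icc_subset_Icc le_rfl ?_
  unfold θside gSide
  split_ifs with h
  · refine zpow_le_zpow_right₀ one_le_two ?_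
    have := hj i h; omega
  · refine zpow_le_zpow_right₀ one_le_two ?_
    have h1 := gS_nonneg m j
    have h2 : (0:ℤ) ≤ ((m:ℤ)+2) * k := by positivity
    linarith

lemma gRect_mem (hn : 2 ≤ m + 2) (j : Fin (m+2) → ℕ)
    (hj : ∀ i : Fin (m+2), (i:ℕ) < m+1 → j i ≤ k) :
    stdRect (m+2) (gSide m k j) ∈
      guzmanFamily (m+2) hn ((2:ℝ) ^ (-((m+2 : ℤ) * k))) k := by
  refine ⟨gSide m k j, ?_, ?_, rfl⟩
  · intro i hi
    have hi' : (i:ℕ) < m+1 := hi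
    exact ⟨j i, hj i hi', by simp [gSide, hi']⟩
  · show gSide m k j ⟨m+1, by omega⟩ = _
    have h1 : (Finset.univ.filter fun i : Fin (m+2) => (i:ℕ) < m+2-1)
        = Finset.univ.filter fun i : Fin (m+2) => (i:ℕ) < m+1 := rfl
    rw [h1, prod_gSide_filter]
    have h2 : gSide m k j ⟨m+1, by omega⟩ = (2:ℝ) ^ (-((m+2 : ℤ) * k) + gS m j) := by
      simp [gSide]
    rw [h2, ← zpow_sub₀ (by norm_num : (2:ℝ) ≠ 0)]
    ring_nf

/-- Dyadic cell at level `l`. -/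
def cell (l : ℕ) : Set ℝ := Set.Ioc ((2:ℝ) ^ (-(l:ℤ) - 1)) ((2:ℝ) ^ (-(l:ℤ)))

lemma cell_disjoint {l l' : ℕ} (h : l ≠ l') : Disjoint (cell l) (cell l') := by
  wlog hlt : l < l' generalizing l l'
  · exact (this h.symm (by omega)).symm
  rw [Set.disjoint_left]
  intro x hx hx'
  have h1 : (2:ℝ) ^ (-(l':ℤ)) ≤ (2:ℝ) ^ (-(l:ℤ) - 1) :=
    zpow_le_zpow_right₀ one_le_two (by omega)
  exact lt_irrefl x (lt_of_le_of_lt (hx'.2.trans h1) hx.1)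

lemma cell_subset (l : ℕ) : cell l ⊆ Set.Icc 0 ((2:ℝ) ^ (-(l:ℤ))) := fun x hx =>
  ⟨le_of_lt (lt_of_le_of_lt (by positivity) hx.1), hx.2⟩

lemma volume_cell (l : ℕ) : volume (cell l) = ENNReal.ofReal ((2:ℝ) ^ (-(l:ℤ) - 1)) := by
  rw [cell, Real.volume_Ioc]
  congr 1
  have : (2:ℝ) ^ (-(l:ℤ)) = (2:ℝ) ^ (-(l:ℤ) - 1) * 2 := by
    rw [← zpow_add_one₀ (by norm_num : (2:ℝ) ≠ 0)]
    ring_nf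
  rw [this]; ring

/-- Extension of a level function on the first `m+1` coordinates. -/
def jext (j : Fin (m+1) → Fin (k+1)) : Fin (m+2) → ℕ := fun i =>
  if h : (i:ℕ) < m+1 then (j ⟨i, h⟩ : ℕ) else 0

lemma jext_le (j : Fin (m+1) → Fin (k+1)) (i : Fin (m+2)) (hi : (i:ℕ) < m+1) :
    jext m k j i ≤ k := by
  simp [jext, hi]
  exact Fin.is_le _

/-- The box `B_j`. -/
def Bset (j : Fin (m+1) → Fin (k+1)) : Set (Fin (m+2) → ℝ) :=
  Set.univ.pi fun i =>
    if (i:ℕ) < m+1 then cell (jext m k j i) else Set.Icc 0 (gSide m k (jext m k j) i)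

lemma Bset_measurable (j : Fin (m+1) → Fin (k+1)) : MeasurableSet (Bset m k j) := by
  refine MeasurableSet.univ_pi fun i => ?_
  split
  · exact measurableSet_Ioc
  · exact measurableSet_Icc

lemma Bset_subset (j : Fin (m+1) → Fin (k+1)) :
    Bset m k j ⊆ stdRect (m+2) (gSide m k (jext m k j)) := by
  refine Set.pi_mono fun i _ => ?_
  split_ifs with h
  · refine (cell_subset _).trans (Set.Icc_subset_Icc le_rfl ?_)
    simp [gSide, h]
  · exact subset_rfl

lemma Bset_disjoint : Pairwise fun j j' : Fin (m+1) → Fin (k+1) =>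
    Disjoint (Bset m k j) (Bset m k j') := by
  intro j j' hne
  obtain ⟨i0, hi0⟩ := Function.ne_iff.1 hne
  rw [Set.disjoint_left]
  intro x hx hx'
  have hlt : (i0 : ℕ) < m+1 := i0.isLt
  set i : Fin (m+2) := ⟨(i0:ℕ), by omega⟩ with hi
  have h1 := hx i (Set.mem_univ i)
  have h2 := hx' i (Set.mem_univ i)
  simp only [Bset] at h1 h2
  rw [if_pos hlt] at h1 h2
  have hj : jext m k j i = (j i0 : ℕ) := by
    show (if h : (i:ℕ) < m+1 then (j ⟨i, h⟩ : ℕ) else 0) = _; exact dif_pos hlt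
  have hj' : jext m k j' i = (j' i0 : ℕ) := by
    show (if h : (i:ℕ) < m+1 then (j' ⟨i, h⟩ : ℕ) else 0) = _; exact dif_pos hlt
  rw [hj] at h1; rw [hj'] at h2
  have : (j i0 : ℕ) ≠ (j' i0 : ℕ) := fun hc => hi0 (Fin.val_injective hc)
  exact absurd h2 ((cell_disjoint this).le_bot ⟨h1, h2⟩).elim

lemma volume_Bset (j : Fin (m+1) → Fin (k+1)) :
    volume (Bset m k j) = ENNReal.ofReal ((2:ℝ) ^ (-(m+1 : ℤ) + -((m+2:ℤ) * k))) := by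
  rw [Bset, volume_pi_pi]
  have hval : ∀ i : Fin (m+2),
      volume (if (i:ℕ) < m+1 then cell (jext m k j i)
        else Set.Icc 0 (gSide m k (jext m k j) i))
      = ENNReal.ofReal ((2:ℝ) ^ (if (i:ℕ) < m+1 then (-(jext m k j i : ℤ) - 1)
          else (-((m+2 : ℤ) * k) + gS m (jext m k j)))) := by
    intro i
    split_ifs with h
    · exact volume_cell _
    · rw [Real.volume_Icc, sub_zero, gSide, if_neg h]
  simp only [hval]
  rw [← ENNReal.ofReal_prod_of_nonneg (fun i _ => by positivity), ← two_zpow_sum]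
  congr 1
  rw [sum_split m]
  rw [if_neg (by omega : ¬ (m+1 < m+1))]
  have : ∑ i ∈ Finset.univ.filter (fun i : Fin (m+2) => (i:ℕ) < m+1),
      (if (i:ℕ) < m+1 then (-(jext m k j i : ℤ) - 1)
        else (-((m+2 : ℤ) * k) + gS m (jext m k j)))
      = -(gS m (jext m k j)) - (m+1) := by
    rw [Finset.sum_congr rfl (fun i hi => if_pos (by simpa using (Finset.mem_filter.1 hi).2)),
      Finset.sum_sub_distrib, Finset.sum_const, card_filter m]
    simp only [gS, nsmul_eq_mul, mul_one, ← Finset.sum_neg_distrib]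
    push_cast
    ring_nf
  rw [this]
  ring

lemma theta_measurable : MeasurableSet (stdRect (m+2) (θside m k)) :=
  MeasurableSet.univ_pi fun _ => measurableSet_Icc

lemma maximal_lb (hn : 2 ≤ m+2) (j : Fin (m+2) → ℕ)
    (hj : ∀ i : Fin (m+2), (i:ℕ) < m+1 → j i ≤ k)
    {x : Fin (m+2) → ℝ} (hx : x ∈ stdRect (m+2) (gSide m k j)) :
    ENNReal.ofReal ((2:ℝ) ^ ((1 - ((m+2 : ℕ) : ℤ)) * k)) ≤
      maximalFn (⋃ k' : ℕ, guzmanFamily (m+2) hn ((2:ℝ) ^ (-(((m+2:ℕ):ℤ) * k'))) k')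
        ((stdRect (m+2) (θside m k)).indicator fun _ => (1:ℝ)) x := by
  classical
  set Θ := stdRect (m+2) (θside m k) with hΘ
  set R := stdRect (m+2) (gSide m k j) with hRdef
  have hΘm : MeasurableSet Θ := theta_measurable m k
  have hsub : Θ ⊆ R := theta_subset m k j hj
  have hmem : R ∈ ⋃ k' : ℕ, guzmanFamily (m+2) hn ((2:ℝ) ^ (-(((m+2:ℕ):ℤ) * k'))) k' := by
    refine Set.mem_iUnion.2 ⟨k, ?_⟩
    have hc : (2:ℝ) ^ (-(((m+2:ℕ):ℤ) * k)) = (2:ℝ) ^ (-((m+2:ℤ) * k)) := by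
      norm_num
    rw [hc]
    exact gRect_mem m k hn j hj
  have himg : (fun y => (0 : Fin (m+2) → ℝ) + y) '' R = R := by simp
  have hxm : x ∈ (fun y => (0 : Fin (m+2) → ℝ) + y) '' R := by rw [himg]; exact hx
  have hvolR : volume R = ENNReal.ofReal ((2:ℝ) ^ (-((m+2:ℤ) * k))) := by
    rw [hRdef, volume_stdRect _ _ (fun i => (gSide_pos m k j i).le), prod_gSide_univ]
  have hvolΘ : volume Θ
      = ENNReal.ofReal ((2:ℝ) ^ (-((m+1 : ℤ) * k) + -((m+2 : ℤ) * k))) := by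
    rw [hΘ, volume_stdRect _ _ (fun i => by unfold θside; split <;> positivity), prod_θside]
  have hval : (∫⁻ y in (fun y => (0 : Fin (m+2) → ℝ) + y) '' R,
      ENNReal.ofReal |Θ.indicator (fun _ => (1:ℝ)) y|) / volume R
      = ENNReal.ofReal ((2:ℝ) ^ ((1 - ((m+2 : ℕ) : ℤ)) * k)) := by
    rw [himg]
    have h1 : (∫⁻ y in R, ENNReal.ofReal |Θ.indicator (fun _ => (1:ℝ)) y|)
        = ∫⁻ y in R, Θ.indicator (fun _ => (1:ℝ≥0∞)) y := by
      refine lintegral_congr fun y => ?_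
      by_cases hy : y ∈ Θ <;> simp [Set.indicator, hy]
    rw [h1, lintegral_indicator hΘm, setLIntegral_one, Measure.restrict_apply hΘm,
      Set.inter_eq_self_of_subset_left hsub, hvolΘ, hvolR,
      ← ENNReal.ofReal_div_of_pos (by positivity)]
    congr 1
    rw [← zpow_sub₀ (by norm_num : (2:ℝ) ≠ 0)]
    congr 1
    push_cast
    ring
  refine le_trans (le_of_eq hval.symm) ?_
  refine le_iSup_of_le R ?_
  refine le_iSup_of_le hmem ?_
  refine le_iSup_of_le 0 ?_
  exact le_iSup_of_le hxm le_rfl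

lemma stdRect_subset_cube (n : ℕ) (α : Fin n → ℝ) (h : ∀ i, α i ≤ 1) :
    stdRect n α ⊆ Set.univ.pi fun _ => Set.Icc (0:ℝ) 1 :=
  Set.pi_mono fun i _ => Set.Icc_subset_Icc le_rfl (h i)

lemma θside_le_one : ∀ i, θside m k i ≤ 1 := fun i => by
  unfold θside; split
  · exact zpow_le_one_of_nonpos₀ one_le_two (by omega)
  · exact zpow_le_one_of_nonpos₀ one_le_two (neg_nonpos.2 (by positivity))

lemma volume_theta : volume (stdRect (m+2) (θside m k))
    = ENNReal.ofReal ((2:ℝ)^(-((m+1:ℤ)*k) + -((m+2:ℤ)*k))) := by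
  rw [volume_stdRect _ _ (fun i => by unfold θside; split <;> positivity), prod_θside]

lemma volume_iUnion_Bset :
    volume (⋃ j : Fin (m+1) → Fin (k+1), Bset m k j)
      = (((k+1)^(m+1) : ℕ) : ℝ≥0∞) * ENNReal.ofReal ((2:ℝ)^(-(m+1:ℤ) + -((m+2:ℤ) * k))) := by
  rw [measure_iUnion (Bset_disjoint m k) (Bset_measurable m k), tsum_fintype]
  simp only [volume_Bset]
  rw [Finset.sum_const, nsmul_eq_mul]
  congr 1
  rw [Finset.card_univ]
  norm_cast
  rw [Fintype.card_fun]
  simp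

lemma key_real_ineq :
    (1 / (3 * (2:ℝ)^m) * 2^((m+1)*k) * (k:ℝ)^(m+1)) *
        (2:ℝ)^(-((m+1:ℤ)*k) + -((m+2:ℤ)*k))
      ≤ (((k+1)^(m+1) : ℕ) : ℝ) * (2:ℝ)^(-(m+1:ℤ) + -((m+2:ℤ) * k)) := by
  have h2 : (2:ℝ) ≠ 0 := by norm_num
  have ha : (0:ℝ) < (2:ℝ)^(-((m+2:ℤ)*k)) := by positivity
  have hsplit1 : (2:ℝ)^(-((m+1:ℤ)*k) + -((m+2:ℤ)*k))
      = (2:ℝ)^(-((m+1:ℤ)*k)) * (2:ℝ)^(-((m+2:ℤ)*k)) := zpow_add₀ h2 _ _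
  have hsplit2 : (2:ℝ)^(-(m+1:ℤ) + -((m+2:ℤ) * k))
      = (2:ℝ)^(-(m+1:ℤ)) * (2:ℝ)^(-((m+2:ℤ)*k)) := zpow_add₀ h2 _ _
  have hcollapse : (2:ℝ)^((m+1)*k) * (2:ℝ)^(-((m+1:ℤ)*k)) = 1 := by
    rw [← zpow_natCast (2:ℝ) ((m+1)*k), ← zpow_add₀ h2]
    rw [show (((m+1)*k : ℕ) : ℤ) + -((m+1:ℤ)*k) = 0 by push_cast; ring, zpow_zero]
  have hinv : (2:ℝ)^(-(m+1:ℤ)) = ((2:ℝ)^(m+1))⁻¹ := by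
    rw [show -(m+1:ℤ) = -(((m+1:ℕ)):ℤ) by push_cast; ring, zpow_neg, zpow_natCast]
  have hcast : (((k+1)^(m+1) : ℕ) : ℝ) = ((k:ℝ)+1)^(m+1) := by push_cast; ring
  calc (1 / (3 * (2:ℝ)^m) * 2^((m+1)*k) * (k:ℝ)^(m+1)) *
        (2:ℝ)^(-((m+1:ℤ)*k) + -((m+2:ℤ)*k))
      = ((k:ℝ)^(m+1) / (3 * 2^m)) *
          ((2:ℝ)^((m+1)*k) * (2:ℝ)^(-((m+1:ℤ)*k))) * (2:ℝ)^(-((m+2:ℤ)*k)) := by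
        rw [hsplit1]; ring
    _ = ((k:ℝ)^(m+1) / (3 * 2^m)) * (2:ℝ)^(-((m+2:ℤ)*k)) := by rw [hcollapse]; ring
    _ ≤ (((k:ℝ)+1)^(m+1) / 2^(m+1)) * (2:ℝ)^(-((m+2:ℤ)*k)) := by
        refine mul_le_mul_of_nonneg_right ?_ ha.le
        refine div_le_div₀ (by positivity) ?_ (by positivity) ?_
        · exact pow_le_pow_left₀ (Nat.cast_nonneg k) (by linarith) _
        · have hp : (0:ℝ) < 2^m := by positivity
          rw [pow_succ]; nlinarith
    _ = (((k+1)^(m+1) : ℕ) : ℝ) * (2:ℝ)^(-(m+1:ℤ) + -((m+2:ℤ) * k)) := by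
        rw [hsplit2, hinv, hcast]; ring

end GuzmanAux

open GuzmanAux

/-- Lemma `lem.stokn2`. For `𝓡 = ⋃_k 𝓡_k` with `α_k = 2^{-nk}`, for each
`k` there are sets `Θ_k ⊆ Y_k ⊆ [0,1]^n` with `|Y_k| ≥ (1/(3·2^{n-2})) 2^{(n-1)k} k^{n-1} |Θ_k|`
and `M_𝓡 χ_{Θ_k} ≥ 2^{(1-n)k}` on `Y_k`. -/
theorem testSets_for_guzmanFamily (n : ℕ) (hn : 2 ≤ n) (k : ℕ) :
    ∃ Θ Y : Set (Fin n → ℝ), MeasurableSet Θ ∧ MeasurableSet Y ∧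
      Θ ⊆ Y ∧ Y ⊆ Set.univ.pi (fun _ : Fin n => Set.Icc (0 : ℝ) 1) ∧
      0 < volume Θ ∧
      ENNReal.ofReal (1 / (3 * 2 ^ (n - 2)) * (2 : ℝ) ^ ((n - 1) * k) * (k : ℝ) ^ (n - 1)) *
          volume Θ ≤ volume Y ∧
      ∀ x ∈ Y, ENNReal.ofReal ((2 : ℝ) ^ ((1 - (n : ℤ)) * k)) ≤
        maximalFn (⋃ k' : ℕ, guzmanFamily n hn ((2 : ℝ) ^ (-((n : ℤ) * k'))) k')
          (Θ.indicator fun _ => (1 : ℝ)) x := by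
  obtain ⟨m, rfl⟩ : ∃ m, n = m + 2 := ⟨n - 2, by omega⟩
  classical
  refine ⟨stdRect (m+2) (θside m k),
    stdRect (m+2) (θside m k) ∪ ⋃ j : Fin (m+1) → Fin (k+1), Bset m k j,
    theta_measurable m k,
    (theta_measurable m k).union (MeasurableSet.iUnion fun j => Bset_measurable m k j),
    Set.subset_union_left, ?_, ?_, ?_, ?_⟩
  · -- Y ⊆ [0,1]^n
    refine Set.union_subset (stdRect_subset_cube _ _ (θside_le_one m k)) ?_
    refine Set.iUnion_subset fun j => (Bset_subset m k j).trans ?_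
    exact stdRect_subset_cube _ _ (gSide_le_one m k _ (jext_le m k j))
  · -- 0 < volume Θ
    rw [volume_theta]
    exact ENNReal.ofReal_pos.2 (by positivity)
  · -- measure inequality
    have hc : (0:ℝ) ≤ 1 / (3 * 2 ^ (m+2-2)) * (2 : ℝ) ^ ((m+2-1) * k) * (k : ℝ) ^ (m+2-1) := by
      positivity
    calc ENNReal.ofReal (1 / (3 * 2 ^ (m+2-2)) * (2 : ℝ) ^ ((m+2-1) * k) * (k : ℝ) ^ (m+2-1)) *
          volume (stdRect (m+2) (θside m k))
        = ENNReal.ofReal ((1 / (3 * (2:ℝ) ^ m) * 2 ^ ((m+1) * k) * (k : ℝ) ^ (m+1)) *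
            (2:ℝ)^(-((m+1:ℤ)*k) + -((m+2:ℤ)*k))) := by
          rw [volume_theta, ← ENNReal.ofReal_mul hc]
          norm_num
      _ ≤ ENNReal.ofReal ((((k+1)^(m+1) : ℕ) : ℝ) * (2:ℝ)^(-(m+1:ℤ) + -((m+2:ℤ) * k))) :=
          ENNReal.ofReal_le_ofReal (key_real_ineq m k)
      _ = volume (⋃ j : Fin (m+1) → Fin (k+1), Bset m k j) := by
          rw [volume_iUnion_Bset, ENNReal.ofReal_mul (by positivity), ENNReal.ofReal_natCast]
      _ ≤ volume (stdRect (m+2) (θside m k) ∪ ⋃ j : Fin (m+1) → Fin (k+1), Bset m k j) :=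
          measure_mono Set.subset_union_right
  · -- maximal function bound
    intro x hx
    rcases hx with hxΘ | hxB
    · exact maximal_lb m k hn (fun _ => k) (fun _ _ => le_rfl)
        (theta_subset m k _ (fun _ _ => le_rfl) hxΘ)
    · obtain ⟨j, hj⟩ := Set.mem_iUnion.1 hxB
      exact maximal_lb m k hn (jext m k j) (jext_le m k j) (Bset_subset m k j hj)


end
end

section
/- Let 𝓡' be a family of standard dyadic rectangles in ℝ² with the following property: for every k ∈ ℕ there is a finite subfamily 𝓡'' ⊆ 𝓡' with #𝓡'' ≥ 2k+1 such that any two distinct R, R' ∈ 𝓡'' are incomparable for inclusion (neither R ⊆ R' nor R' ⊆ R) and satisfy R ∩ R' ∈ 𝓡'. Let 𝓡 := { R × I : R ∈ 𝓡', I a dyadic interval [0, 2^{−m}], m ∈ ℕ } be the associated Soria family in ℝ³. Then for every Orlicz function Φ satisfying Φ = o(Φ₂) at ∞, the maximal operator M_𝓡 does not satisfy a weak L^Φ inequality. -/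
open MeasureTheory Set Filter
open scoped ENNReal

noncomputable section

namespace SoriaSharp

def dy (n : ℕ) : ℝ := ((2:ℝ)^n)⁻¹

lemma dy_pos (n : ℕ) : 0 < dy n := by unfold dy; positivity

lemma two_pow_dy (n : ℕ) : (2:ℝ)^n * dy n = 1 := by
  unfold dy
  field_simp

lemma dy_succ (n : ℕ) : dy (n+1) = dy n / 2 := by
  unfold dy; rw [pow_succ, mul_inv]; ring

lemma dy_add (m n : ℕ) : dy (m+n) = dy m * dy n := by
  unfold dy; rw [pow_add, mul_inv]

lemma dy_lt_dy {m n : ℕ} (h : m < n) : dy n < dy m := by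
  unfold dy
  apply inv_strictAnti₀ (by positivity)
  exact pow_lt_pow_right₀ one_lt_two h

lemma dy_le_dy {m n : ℕ} (h : m ≤ n) : dy n ≤ dy m := by
  rcases eq_or_lt_of_le h with rfl | h
  · exact le_refl _
  · exact (dy_lt_dy h).le

lemma dy_le_one (n : ℕ) : dy n ≤ 1 := by
  have := dy_le_dy (Nat.zero_le n)
  simpa [dy] using this

lemma dy_zpow (n : ℕ) : (2:ℝ) ^ (-(n:ℤ)) = dy n := by
  rw [zpow_neg, zpow_natCast]; rfl

/-- A dyadic cell `[n·2⁻ᴸ, (n+1)·2⁻ᴸ)`. -/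
def cell (L : ℕ) (n : ℤ) : Set ℝ := Ico ((n:ℝ) * dy L) (((n:ℝ)+1) * dy L)

lemma volume_cell (L : ℕ) (n : ℤ) : volume (cell L n) = ENNReal.ofReal (dy L) := by
  rw [cell, Real.volume_Ico]; ring_nf

lemma measurableSet_cell (L : ℕ) (n : ℤ) : MeasurableSet (cell L n) :=
  measurableSet_Ico

lemma cell_disjoint {L : ℕ} {n m : ℤ} (h : n ≠ m) : Disjoint (cell L n) (cell L m) := by
  rcases h.lt_or_gt with h | h
  · apply Set.disjoint_left.mpr
    rintro x ⟨_, hx2⟩ ⟨hx3, _⟩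
    have h1 : ((n:ℝ)+1) ≤ (m:ℝ) := by exact_mod_cast h
    have := dy_pos L
    nlinarith
  · apply Set.disjoint_left.mpr
    rintro x ⟨hx1, _⟩ ⟨_, hx4⟩
    have h1 : ((m:ℝ)+1) ≤ (n:ℝ) := by exact_mod_cast h
    have := dy_pos L
    nlinarith

lemma cell_split (L : ℕ) (n : ℤ) :
    cell L n = cell (L+1) (2*n) ∪ cell (L+1) (2*n+1) := by
  have hd := dy_succ L
  have h1 : ((2*n : ℤ):ℝ) * dy (L+1) = (n:ℝ) * dy L := by push_cast; rw [hd]; ring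
  have h3 : (((2*n+1 : ℤ):ℝ) + 1) * dy (L+1) = ((n:ℝ)+1) * dy L := by
    push_cast; rw [hd]; ring
  have hcast : ((2*n:ℤ):ℝ) + 1 = ((2*n+1:ℤ):ℝ) := by push_cast; ring
  rw [cell, cell, cell, h1, hcast, h3]
  refine (Set.Ico_union_Ico_eq_Ico ?_ ?_).symm
  · push_cast
    rw [hd]
    have := dy_pos L
    nlinarith
  · rw [← h3]
    push_cast
    rw [hd]
    have := dy_pos L
    nlinarith

/-- The "digit 0" set at scale `p`: period `2⁻ᵖ`, lower half of each period cell. -/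
def Gset (p : ℕ) : Set ℝ := {x | Int.fract ((2:ℝ)^p * x) < 1/2}

lemma mem_cell_iff {L : ℕ} {n : ℤ} {x : ℝ} :
    x ∈ cell L n ↔ (n:ℝ) ≤ (2:ℝ)^L * x ∧ (2:ℝ)^L * x < (n:ℝ) + 1 := by
  have hp : (0:ℝ) < (2:ℝ)^L := by positivity
  have hd := two_pow_dy L
  constructor
  · rintro ⟨h1, h2⟩
    constructor
    · calc (n:ℝ) = (n:ℝ) * ((2:ℝ)^L * dy L) := by rw [hd]; ring
        _ = (2:ℝ)^L * ((n:ℝ) * dy L) := by ring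
        _ ≤ (2:ℝ)^L * x := by nlinarith
    · calc (2:ℝ)^L * x < (2:ℝ)^L * (((n:ℝ)+1) * dy L) := by nlinarith
        _ = ((n:ℝ)+1) * ((2:ℝ)^L * dy L) := by ring
        _ = (n:ℝ)+1 := by rw [hd]; ring
  · rintro ⟨h1, h2⟩
    constructor
    · have : (n:ℝ) * dy L ≤ ((2:ℝ)^L * x) * dy L := by nlinarith [dy_pos L]
      calc (n:ℝ) * dy L ≤ ((2:ℝ)^L * x) * dy L := this
        _ = x * ((2:ℝ)^L * dy L) := by ring
        _ = x := by rw [hd]; ring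
    · have : ((2:ℝ)^L * x) * dy L < ((n:ℝ)+1) * dy L := by nlinarith [dy_pos L]
      calc x = x * ((2:ℝ)^L * dy L) := by rw [hd]; ring
        _ = ((2:ℝ)^L * x) * dy L := by ring
        _ < ((n:ℝ)+1) * dy L := this

lemma Gset_inter_cell (p : ℕ) (n : ℤ) :
    Gset p ∩ cell p n = cell (p+1) (2*n) := by
  ext x
  have hp : (0:ℝ) < (2:ℝ)^p := by positivity
  constructor
  · rintro ⟨hG, hc⟩
    have hb := mem_cell_iff.mp hc
    have hfl : ⌊(2:ℝ)^p * x⌋ = n := Int.floor_eq_iff.mpr ⟨hb.1, hb.2⟩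
    have hfr : Int.fract ((2:ℝ)^p * x) = (2:ℝ)^p * x - n := by
      rw [Int.fract, hfl]
    rw [mem_cell_iff]
    have hG' : (2:ℝ)^p * x - n < 1/2 := by rw [← hfr]; exact hG
    constructor
    · push_cast
      calc ((2*n : ℝ)) = 2 * (n:ℝ) := by ring
        _ ≤ 2 * ((2:ℝ)^p * x) := by nlinarith [hb.1]
        _ = (2:ℝ)^(p+1) * x := by rw [pow_succ]; ring
    · push_cast
      calc (2:ℝ)^(p+1) * x = 2 * ((2:ℝ)^p * x) := by rw [pow_succ]; ring
        _ < 2 * ((n:ℝ) + 1/2) := by nlinarith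
        _ = 2*(n:ℝ) + 1 := by ring
  · intro hc
    have hb := mem_cell_iff.mp hc
    push_cast at hb
    have h1 : (n:ℝ) ≤ (2:ℝ)^p * x := by
      have : 2*(n:ℝ) ≤ (2:ℝ)^(p+1)*x := hb.1
      rw [pow_succ] at this; nlinarith
    have h2 : (2:ℝ)^p * x < (n:ℝ) + 1/2 := by
      have : (2:ℝ)^(p+1)*x < 2*(n:ℝ)+1 := hb.2
      rw [pow_succ] at this; nlinarith
    have hfl : ⌊(2:ℝ)^p * x⌋ = n := Int.floor_eq_iff.mpr ⟨h1, by linarith⟩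
    constructor
    · show Int.fract ((2:ℝ)^p * x) < 1/2
      rw [Int.fract, hfl]; push_cast; linarith
    · rw [mem_cell_iff]; exact ⟨h1, by linarith⟩

lemma Gsetc_inter_cell (p : ℕ) (n : ℤ) :
    (Gset p)ᶜ ∩ cell p n = cell (p+1) (2*n+1) := by
  have hsplit := cell_split p n
  have hG := Gset_inter_cell p n
  ext x
  constructor
  · rintro ⟨hGc, hc⟩
    have : x ∈ cell (p+1) (2*n) ∪ cell (p+1) (2*n+1) := hsplit ▸ hc
    rcases this with h | h
    · exfalso; apply hGc; rw [← hG] at h; exact h.1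
    · exact h
  · intro hc
    have hcell : x ∈ cell p n := by rw [hsplit]; exact Or.inr hc
    refine ⟨?_, hcell⟩
    intro hGx
    have : x ∈ cell (p+1) (2*n) := by rw [← hG]; exact ⟨hGx, hcell⟩
    exact (Set.disjoint_left.mp (cell_disjoint (by omega)) this) hc

lemma Gset_eq_iUnion (p : ℕ) : Gset p = ⋃ (n : ℤ), cell (p+1) (2*n) := by
  ext x
  simp only [Set.mem_iUnion]
  constructor
  · intro hG
    refine ⟨⌊(2:ℝ)^p * x⌋, ?_⟩
    rw [← Gset_inter_cell]
    refine ⟨hG, ?_⟩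
    rw [mem_cell_iff]
    exact ⟨Int.floor_le _, Int.lt_floor_add_one _⟩
  · rintro ⟨n, hn⟩
    rw [← Gset_inter_cell] at hn
    exact hn.1

lemma measurableSet_Gset (p : ℕ) : MeasurableSet (Gset p) := by
  rw [Gset_eq_iUnion]
  exact MeasurableSet.iUnion fun n => measurableSet_cell _ _

/-- signed digit set -/
def sg (σ : ℕ → Bool) (q : ℕ) : Set ℝ := if σ q then Gset q else (Gset q)ᶜ

lemma measurableSet_sg (σ : ℕ → Bool) (q : ℕ) : MeasurableSet (sg σ q) := by
  unfold sg
  split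
  · exact measurableSet_Gset q
  · exact (measurableSet_Gset q).compl


lemma measurableSet_biInter_sg (Q : Finset ℕ) (σ : ℕ → Bool) :
    MeasurableSet (⋂ q ∈ Q, sg σ q) :=
  MeasurableSet.biInter Q.countable_toSet (fun q _ => measurableSet_sg σ q)

/-- Main independence lemma: intersecting a dyadic cell at scale `L` with finitely
many digit conditions at scales `≥ L` halves the measure once per condition. -/
lemma pile : ∀ (c : ℕ) (Q : Finset ℕ) (σ : ℕ → Bool), Q.card = c →
    ∀ (L : ℕ) (n : ℤ), (∀ q ∈ Q, L ≤ q) →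
    volume (cell L n ∩ ⋂ q ∈ Q, sg σ q) = ENNReal.ofReal (dy (L + c)) := by
  intro c
  induction c with
  | zero =>
    intro Q σ hcard L n _
    rw [Finset.card_eq_zero] at hcard
    subst hcard
    simp [volume_cell]
  | succ c ihc =>
    intro Q σ hcard
    have hne : Q.Nonempty := by
      rw [← Finset.card_pos, hcard]; omega
    have key : ∀ (d L : ℕ) (n : ℤ), (∀ q ∈ Q, L ≤ q) → Q.min' hne ≤ L + d →
        volume (cell L n ∩ ⋂ q ∈ Q, sg σ q) = ENNReal.ofReal (dy (L + (c+1))) := by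
      intro d
      induction d with
      | zero =>
        intro L n hQ hmin
        have hminL : Q.min' hne = L :=
          le_antisymm (by omega) (hQ _ (Finset.min'_mem Q hne))
        have hLQ : L ∈ Q := hminL ▸ Finset.min'_mem Q hne
        classical
        rw [← Finset.insert_erase hLQ, Finset.set_biInter_insert]
        have hre : cell L n ∩ (sg σ L ∩ ⋂ q ∈ Q.erase L, sg σ q)
            = (sg σ L ∩ cell L n) ∩ ⋂ q ∈ Q.erase L, sg σ q := by
          rw [← Set.inter_assoc, Set.inter_comm (cell L n)]
        rw [hre]
        have hcard' : (Q.erase L).card = c := by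
          rw [Finset.card_erase_of_mem hLQ, hcard]
          omega
        have hQ' : ∀ q ∈ Q.erase L, L + 1 ≤ q := by
          intro q hq
          have h1 := Finset.mem_of_mem_erase hq
          have h2 := Finset.ne_of_mem_erase hq
          have := hQ q h1
          omega
        by_cases hσ : σ L
        · rw [show sg σ L = Gset L from by simp [sg, hσ], Gset_inter_cell]
          rw [ihc (Q.erase L) σ hcard' (L+1) (2*n) hQ']
          rw [show L + 1 + c = L + (c+1) from by omega]
        · rw [show sg σ L = (Gset L)ᶜ from by simp [sg, hσ], Gsetc_inter_cell]
          rw [ihc (Q.erase L) σ hcard' (L+1) (2*n+1) hQ']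
          rw [show L + 1 + c = L + (c+1) from by omega]
      | succ d ihd =>
        intro L n hQ hmin
        by_cases hd : Q.min' hne ≤ L + d
        · exact ihd L n hQ hd
        · have hQ1 : ∀ q ∈ Q, L + 1 ≤ q := by
            intro q hq
            have := Finset.min'_le Q q hq
            omega
          have hmin1 : Q.min' hne ≤ (L+1) + d := by omega
          rw [cell_split, Set.union_inter_distrib_right]
          rw [measure_union ?hdisj ?hmeas]
          case hdisj =>
            exact Disjoint.mono inter_subset_left inter_subset_left
              (cell_disjoint (by omega))
          case hmeas =>
            exact (measurableSet_cell _ _).inter (measurableSet_biInter_sg Q σ)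
          rw [ihd (L+1) (2*n) hQ1 hmin1, ihd (L+1) (2*n+1) hQ1 hmin1]
          rw [← ENNReal.ofReal_add (dy_pos _).le (dy_pos _).le]
          congr 1
          rw [show L + 1 + (c+1) = (L + (c+1)) + 1 from by omega, dy_succ]
          ring
    intro L n hQ
    have hL : L ≤ Q.min' hne := hQ _ (Finset.min'_mem Q hne)
    exact key (Q.min' hne - L) L n hQ (by omega)

lemma cell_succ_subset (q : ℕ) (n : ℤ) : ∃ m : ℤ, cell (q+1) n ⊆ cell q m := by
  rcases Int.even_or_odd n with ⟨m, hm⟩ | ⟨m, hm⟩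
  · refine ⟨m, ?_⟩
    rw [cell_split q m, show 2*m = n from by omega]
    exact Set.subset_union_left
  · refine ⟨m, ?_⟩
    rw [cell_split q m, show 2*m+1 = n from by omega]
    exact Set.subset_union_right

lemma cell_le_subset {L L' : ℕ} (h : L' ≤ L) (n : ℤ) : ∃ m, cell L n ⊆ cell L' m := by
  obtain ⟨d, rfl⟩ : ∃ d, L = L' + d := ⟨L - L', by omega⟩
  clear h
  induction d generalizing n with
  | zero => exact ⟨n, subset_rfl⟩
  | succ d ihd =>
    obtain ⟨m', hm'⟩ := cell_succ_subset (L' + d) n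
    obtain ⟨m, hm⟩ := ihd m'
    exact ⟨m, hm'.trans hm⟩

/-- Digit conditions at scales coarser than the cell are constant on the cell. -/
lemma freeze {p L : ℕ} (h : p + 1 ≤ L) {n : ℤ} {x y : ℝ}
    (hx : x ∈ cell L n) (hy : y ∈ cell L n) (hxG : x ∈ Gset p) : y ∈ Gset p := by
  obtain ⟨m, hsub⟩ := cell_le_subset h n
  rcases Int.even_or_odd m with ⟨r, hr⟩ | ⟨r, hr⟩
  · have hs : cell (p+1) m ⊆ Gset p := by
      rw [show m = 2*r from by omega, ← Gset_inter_cell]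
      exact Set.inter_subset_left
    exact hs (hsub hy)
  · exfalso
    have hs : cell (p+1) m ⊆ (Gset p)ᶜ := by
      rw [show m = 2*r+1 from by omega, ← Gsetc_inter_cell]
      exact Set.inter_subset_left
    exact hs (hsub hx) hxG

lemma mem_cell_floor (L : ℕ) (x : ℝ) : x ∈ cell L ⌊(2:ℝ)^L * x⌋ :=
  mem_cell_iff.mpr ⟨Int.floor_le _, Int.lt_floor_add_one _⟩

lemma cell_zero : cell 0 0 = Ico (0:ℝ) 1 := by
  simp [cell, dy]

lemma cell_floor_subset_unit {L : ℕ} {x : ℝ} (hx0 : 0 ≤ x) (hx1 : x < 1) :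
    cell L ⌊(2:ℝ)^L * x⌋ ⊆ cell 0 0 := by
  have hpL : (0:ℝ) < (2:ℝ)^L := by positivity
  set n := ⌊(2:ℝ)^L * x⌋ with hn
  have h0 : (0:ℤ) ≤ n := Int.floor_nonneg.mpr (by positivity)
  have h1 : n < 2^L := by
    rw [hn]
    apply Int.floor_lt.mpr
    push_cast
    nlinarith
  rw [cell_zero]
  intro y hy
  rw [mem_cell_iff] at hy
  have hy1 : (n:ℝ) ≤ (2:ℝ)^L * y := hy.1
  have hy2 : (2:ℝ)^L * y < (n:ℝ) + 1 := hy.2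
  have hn1 : (n:ℝ) + 1 ≤ (2:ℝ)^L := by
    have : ((n+1 : ℤ):ℝ) ≤ ((2^L : ℤ):ℝ) := by exact_mod_cast h1
    push_cast at this
    linarith
  constructor
  · have h0' : (0:ℝ) ≤ (n:ℝ) := by exact_mod_cast h0
    nlinarith
  · nlinarith

lemma biInter_image_finset (s : Finset ℕ) (g : ℕ → ℕ) (F : ℕ → Set ℝ) :
    ⋂ q ∈ s.image g, F q = ⋂ μ ∈ s, F (g μ) := by
  ext x
  simp only [Set.mem_iInter, Finset.mem_image]
  constructor
  · intro h μ hμ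
    exact h (g μ) ⟨μ, hμ, rfl⟩
  · rintro h q ⟨μ, hμ, rfl⟩
    exact h μ hμ

lemma pileIdx (s : Finset ℕ) (g : ℕ → ℕ) (hg : Set.InjOn g s) (σ : ℕ → Bool)
    (L : ℕ) (n : ℤ) (hL : ∀ μ ∈ s, L ≤ g μ) :
    volume (cell L n ∩ ⋂ μ ∈ s, sg σ (g μ)) = ENNReal.ofReal (dy (L + s.card)) := by
  rw [← biInter_image_finset s g (sg σ)]
  rw [pile (s.image g).card (s.image g) σ rfl L n ?_]
  · rw [Finset.card_image_of_injOn hg]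
  · intro q hq
    obtain ⟨μ, hμ, rfl⟩ := Finset.mem_image.mp hq
    exact hL μ hμ


lemma zpow_neg_anti {m n : ℕ} (h : m ≤ n) : (2:ℝ) ^ (-(n:ℤ)) ≤ (2:ℝ) ^ (-(m:ℤ)) := by
  rw [dy_zpow, dy_zpow]; exact dy_le_dy h

lemma zpow_neg_pos (m : ℕ) : (0:ℝ) < (2:ℝ) ^ (-(m:ℤ)) := by
  rw [dy_zpow]; exact dy_pos m

lemma stdRect_mono {n : ℕ} {α β : Fin n → ℝ} (h : ∀ i, α i ≤ β i) :
    stdRect n α ⊆ stdRect n β := by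
  intro x hx
  rw [stdRect, Set.mem_univ_pi] at hx ⊢
  exact fun i => ⟨(hx i).1, le_trans (hx i).2 (h i)⟩

lemma stdRect_inter {n : ℕ} (α β : Fin n → ℝ) :
    stdRect n α ∩ stdRect n β = stdRect n (fun i => min (α i) (β i)) := by
  have hfun : (fun i => Icc (0:ℝ) (α i) ∩ Icc 0 (β i)) = fun i => Icc 0 (min (α i) (β i)) := by
    funext i
    rw [Set.Icc_inter_Icc]
    norm_num
  rw [stdRect, stdRect, stdRect, ← Set.pi_inter_distrib, hfun]


lemma dy_expand3 (p q r : ℕ) : dy (p + q + r) = dy p * dy q * dy r := by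
  rw [dy_add, dy_add]

lemma dy_expand5 (p q r u w : ℕ) :
    dy (p + q + (r + u) + w) = dy p * dy q * (dy r * dy u) * dy w := by
  rw [dy_add, dy_add, dy_add, dy_add]

/-- Extraction of a staircase of pairwise-intersections from the hypothesis `H`. -/
lemma extract (𝓡' : Set (Set (Fin 2 → ℝ)))
    (h𝓡' : ∀ R ∈ 𝓡', IsStandardDyadicRect R)
    (H : ∀ k : ℕ, ∃ F : Finset (Set (Fin 2 → ℝ)), ↑F ⊆ 𝓡' ∧ 2 * k + 1 ≤ F.card ∧
      ∀ R ∈ F, ∀ R' ∈ F, R ≠ R' →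
        (¬ R ⊆ R' ∧ ¬ R' ⊆ R) ∧ R ∩ R' ∈ 𝓡') (K : ℕ) :
    ∃ a b : ℕ → ℕ,
      (∀ i j, i < j → j ≤ K → a i < a j) ∧
      (∀ i j, i < j → j ≤ K → b j < b i) ∧
      (∀ i j, i < j → j ≤ K →
        stdRect 2 (fun t : Fin 2 => if t = 0 then (2:ℝ) ^ (-(a j : ℤ)) else (2:ℝ) ^ (-(b i : ℤ))) ∈ 𝓡') := by
  classical
  obtain ⟨F, hFsub, hFcard, hFpair⟩ := H K
  have hstd : ∀ R ∈ F, ∃ m : Fin 2 → ℕ, R = stdRect 2 (fun i => (2:ℝ)^(-(m i : ℤ))) :=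
    fun R hR => h𝓡' R (hFsub hR)
  choose! mfun hmfun using hstd
  have hinj0 : ∀ R ∈ F, ∀ R' ∈ F, mfun R 0 = mfun R' 0 → R = R' := by
    intro R hR R' hR' he
    by_contra hne
    have h1 := hmfun R hR
    have h2 := hmfun R' hR'
    rcases le_total (mfun R 1) (mfun R' 1) with h | h
    · apply (hFpair R hR R' hR' hne).1.2
      rw [h1, h2]
      apply stdRect_mono
      intro i
      by_cases hi : i = 0
      · subst hi; rw [he]
      · rw [show i = 1 from by omega]
        exact zpow_neg_anti h
    · apply (hFpair R hR R' hR' hne).1.1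
      rw [h1, h2]
      apply stdRect_mono
      intro i
      by_cases hi : i = 0
      · subst hi; rw [he]
      · rw [show i = 1 from by omega]
        exact zpow_neg_anti h
  set T : Finset ℕ := F.image (fun R => mfun R 0) with hT
  have hTcard : K + 1 ≤ T.card := by
    rw [hT, Finset.card_image_of_injOn (fun R hR R' hR' he => hinj0 R hR R' hR' he)]
    omega
  set e := T.orderEmbOfCardLe hTcard with he
  set a : ℕ → ℕ := fun i => e ⟨min i K, by omega⟩ with haDef
  have ha : ∀ i j, i < j → j ≤ K → a i < a j := by
    intro i j hij hj
    apply e.strictMono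
    rw [Fin.lt_def]
    simp only
    omega
  have hsel : ∀ i : ℕ, ∃ R, R ∈ F ∧ mfun R 0 = a i := by
    intro i
    have hmem := Finset.orderEmbOfCardLe_mem T hTcard ⟨min i K, by omega⟩
    obtain ⟨R, hR, hR0⟩ := Finset.mem_image.mp hmem
    exact ⟨R, hR, hR0⟩
  choose Rsel hRselF hRsel0 using hsel
  set b : ℕ → ℕ := fun i => mfun (Rsel i) 1 with hbDef
  have hRect : ∀ i, Rsel i = stdRect 2
      (fun t : Fin 2 => if t = 0 then (2:ℝ)^(-(a i : ℤ)) else (2:ℝ)^(-(b i : ℤ))) := by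
    intro i
    have hfun : (fun t : Fin 2 => (2:ℝ)^(-(mfun (Rsel i) t : ℤ)))
        = (fun t : Fin 2 => if t = 0 then (2:ℝ)^(-(a i : ℤ)) else (2:ℝ)^(-(b i : ℤ))) := by
      funext t
      by_cases ht : t = 0
      · subst ht
        rw [if_pos (show (0:Fin 2) = 0 from rfl), hRsel0]
      · rw [show t = 1 from by omega, if_neg (show ¬((1:Fin 2) = 0) from by decide)]
    rw [hmfun (Rsel i) (hRselF i), hfun]
  have hne : ∀ i j, i < j → j ≤ K → Rsel i ≠ Rsel j := by
    intro i j hij hj hcontra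
    have h0 : a i = a j := by rw [← hRsel0 i, ← hRsel0 j, hcontra]
    have := ha i j hij hj
    omega
  have hb : ∀ i j, i < j → j ≤ K → b j < b i := by
    intro i j hij hj
    by_contra hcon
    push_neg at hcon
    apply (hFpair (Rsel i) (hRselF i) (Rsel j) (hRselF j) (hne i j hij hj)).1.2
    rw [hRect i, hRect j]
    apply stdRect_mono
    intro t
    by_cases ht : t = 0
    · subst ht
      rw [if_pos (show (0:Fin 2) = 0 from rfl), if_pos (show (0:Fin 2) = 0 from rfl)]
      exact zpow_neg_anti (ha i j hij hj).le
    · rw [show t = 1 from by omega, if_neg (show ¬((1:Fin 2) = 0) from by decide), if_neg (show ¬((1:Fin 2) = 0) from by decide)]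
      exact zpow_neg_anti hcon
  refine ⟨a, b, ha, hb, ?_⟩
  intro i j hij hj
  have hmemI := (hFpair (Rsel i) (hRselF i) (Rsel j) (hRselF j) (hne i j hij hj)).2
  have hEq : Rsel i ∩ Rsel j = stdRect 2
      (fun t : Fin 2 => if t = 0 then (2:ℝ) ^ (-(a j : ℤ)) else (2:ℝ) ^ (-(b i : ℤ))) := by
    rw [hRect i, hRect j, stdRect_inter]
    have hfun2 : (fun t : Fin 2 => min
          (if t = 0 then (2:ℝ)^(-(a i : ℤ)) else (2:ℝ)^(-(b i : ℤ)))
          (if t = 0 then (2:ℝ)^(-(a j : ℤ)) else (2:ℝ)^(-(b j : ℤ))))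
        = (fun t : Fin 2 => if t = 0 then (2:ℝ) ^ (-(a j : ℤ)) else (2:ℝ) ^ (-(b i : ℤ))) := by
      funext t
      by_cases ht : t = 0
      · subst ht
        rw [if_pos (show (0:Fin 2) = 0 from rfl), if_pos (show (0:Fin 2) = 0 from rfl),
          if_pos (show (0:Fin 2) = 0 from rfl)]
        exact min_eq_right (zpow_neg_anti (ha i j hij hj).le)
      · rw [show t = 1 from by omega, if_neg (show ¬((1:Fin 2) = 0) from by decide),
          if_neg (show ¬((1:Fin 2) = 0) from by decide),
          if_neg (show ¬((1:Fin 2) = 0) from by decide)]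
        exact min_eq_left (zpow_neg_anti (hb i j hij hj).le)
    rw [hfun2]
  rw [← hEq]
  exact hmemI


/-! ### Products over `Fin 3` -/

def s3 (S0 S1 S2 : Set ℝ) : Fin 3 → Set ℝ := fun i => if i = 0 then S0 else if i = 1 then S1 else S2

def P3 (S0 S1 S2 : Set ℝ) : Set (Fin 3 → ℝ) := Set.pi univ (s3 S0 S1 S2)

lemma mem_P3 {S0 S1 S2 : Set ℝ} {z : Fin 3 → ℝ} :
    z ∈ P3 S0 S1 S2 ↔ z 0 ∈ S0 ∧ z 1 ∈ S1 ∧ z 2 ∈ S2 := by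
  rw [P3, Set.mem_univ_pi]
  constructor
  · intro h
    refine ⟨?_, ?_, ?_⟩
    · have := h 0; simpa [s3] using this
    · have := h 1; simpa [s3] using this
    · have := h 2; simpa [s3] using this
  · rintro ⟨h0, h1, h2⟩ i
    fin_cases i
    · simpa [s3] using h0
    · simpa [s3] using h1
    · simpa [s3] using h2

lemma volume_P3 (S0 S1 S2 : Set ℝ) :
    volume (P3 S0 S1 S2) = volume S0 * volume S1 * volume S2 := by
  rw [P3, volume_pi_pi, Fin.prod_univ_three]
  have e0 : s3 S0 S1 S2 0 = S0 := by simp [s3]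
  have e1 : s3 S0 S1 S2 1 = S1 := by simp [s3]
  have e2 : s3 S0 S1 S2 2 = S2 := by simp [s3]
  rw [e0, e1, e2]

lemma measurableSet_P3 {S0 S1 S2 : Set ℝ} (h0 : MeasurableSet S0) (h1 : MeasurableSet S1)
    (h2 : MeasurableSet S2) : MeasurableSet (P3 S0 S1 S2) := by
  apply MeasurableSet.univ_pi
  intro i
  fin_cases i
  · simpa [s3] using h0
  · simpa [s3] using h1
  · simpa [s3] using h2

lemma P3_mono {S0 S1 S2 S0' S1' S2' : Set ℝ} (h0 : S0 ⊆ S0') (h1 : S1 ⊆ S1') (h2 : S2 ⊆ S2') :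
    P3 S0 S1 S2 ⊆ P3 S0' S1' S2' := by
  intro z hz
  rw [mem_P3] at hz ⊢
  exact ⟨h0 hz.1, h1 hz.2.1, h2 hz.2.2⟩

lemma P3_disjoint0 {S0 S1 S2 S0' S1' S2' : Set ℝ} (h : Disjoint S0 S0') :
    Disjoint (P3 S0 S1 S2) (P3 S0' S1' S2') := by
  rw [Set.disjoint_left]
  intro z hz hz'
  exact Set.disjoint_left.mp h (mem_P3.mp hz).1 (mem_P3.mp hz').1

lemma P3_disjoint2 {S0 S1 S2 S0' S1' S2' : Set ℝ} (h : Disjoint S2 S2') :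
    Disjoint (P3 S0 S1 S2) (P3 S0' S1' S2') := by
  rw [Set.disjoint_left]
  intro z hz hz'
  exact Set.disjoint_left.mp h (mem_P3.mp hz).2.2 (mem_P3.mp hz').2.2

lemma image_translate_P3 (v : Fin 3 → ℝ) (a0 b0 a1 b1 a2 b2 : ℝ) :
    ((fun y => v + y) '' P3 (Icc a0 b0) (Icc a1 b1) (Icc a2 b2))
      = P3 (Icc (v 0 + a0) (v 0 + b0)) (Icc (v 1 + a1) (v 1 + b1)) (Icc (v 2 + a2) (v 2 + b2)) := by
  ext u
  constructor
  · rintro ⟨y, hy, rfl⟩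
    rw [mem_P3] at hy ⊢
    obtain ⟨⟨p1, p2⟩, ⟨p3, p4⟩, ⟨p5, p6⟩⟩ := hy
    refine ⟨⟨?_, ?_⟩, ⟨?_, ?_⟩, ⟨?_, ?_⟩⟩ <;>
      simp only [Pi.add_apply] <;> linarith
  · intro hu
    rw [mem_P3] at hu
    obtain ⟨⟨p1, p2⟩, ⟨p3, p4⟩, ⟨p5, p6⟩⟩ := hu
    refine ⟨u - v, ?_, by show v + (u - v) = u; rw [add_sub_cancel]⟩
    rw [mem_P3]
    refine ⟨⟨?_, ?_⟩, ⟨?_, ?_⟩, ⟨?_, ?_⟩⟩ <;>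
      simp only [Pi.sub_apply] <;> linarith

/-! ### The digit sets of the counterexample -/

def ApD (a : ℕ → ℕ) (K : ℕ) : Set ℝ :=
  cell 0 0 ∩ ⋂ μ ∈ Finset.Icc 1 K, Gset (a μ - 1)

def BpD (b : ℕ → ℕ) (K : ℕ) : Set ℝ :=
  cell 0 0 ∩ ⋂ μ ∈ Finset.Icc 0 (K-1), Gset (b μ - 1)

def XpD (a : ℕ → ℕ) (j : ℕ) : Set ℝ :=
  cell 0 0 ∩ ⋂ μ ∈ Finset.Icc 1 (j+1), sg (fun q => decide (q ≠ a (j+1) - 1)) (a μ - 1)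

def YpD (b : ℕ → ℕ) (K i : ℕ) : Set ℝ :=
  cell 0 0 ∩ ⋂ μ ∈ Finset.Icc i (K-1), Gset (b μ - 1)

lemma biInter_Gset_eq_sg (s : Finset ℕ) (g : ℕ → ℕ) :
    (⋂ μ ∈ s, Gset (g μ)) = ⋂ μ ∈ s, sg (fun _ => true) (g μ) := by
  apply Set.iInter₂_congr
  intro μ _
  simp [sg]

lemma measurableSet_biInter_idx (s : Finset ℕ) (F : ℕ → Set ℝ)
    (hF : ∀ μ, MeasurableSet (F μ)) : MeasurableSet (⋂ μ ∈ s, F μ) :=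
  MeasurableSet.biInter s.countable_toSet (fun μ _ => hF μ)

lemma measurableSet_ApD (a : ℕ → ℕ) (K : ℕ) : MeasurableSet (ApD a K) :=
  (measurableSet_cell _ _).inter
    (measurableSet_biInter_idx _ _ (fun μ => measurableSet_Gset _))

lemma measurableSet_BpD (b : ℕ → ℕ) (K : ℕ) : MeasurableSet (BpD b K) :=
  (measurableSet_cell _ _).inter
    (measurableSet_biInter_idx _ _ (fun μ => measurableSet_Gset _))

lemma measurableSet_XpD (a : ℕ → ℕ) (j : ℕ) : MeasurableSet (XpD a j) :=
  (measurableSet_cell _ _).inter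
    (measurableSet_biInter_idx _ _ (fun μ => measurableSet_sg _ _))

lemma measurableSet_YpD (b : ℕ → ℕ) (K i : ℕ) : MeasurableSet (YpD b K i) :=
  (measurableSet_cell _ _).inter
    (measurableSet_biInter_idx _ _ (fun μ => measurableSet_Gset _))

section Staircase

variable {a b : ℕ → ℕ} {K : ℕ}
variable (ha : ∀ i j, i < j → j ≤ K → a i < a j)
variable (hb : ∀ i j, i < j → j ≤ K → b j < b i)

include ha in
lemma a_pos {μ : ℕ} (h1 : 1 ≤ μ) (h2 : μ ≤ K) : 1 ≤ a μ := by
  have := ha 0 μ (by omega) h2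
  omega

include hb in
lemma b_pos {μ : ℕ} (h2 : μ + 1 ≤ K) : 1 ≤ b μ := by
  have := hb μ K (by omega) le_rfl
  omega

include ha in
lemma a_injOn {s : Finset ℕ} (hs : ∀ μ ∈ s, 1 ≤ μ ∧ μ ≤ K) :
    Set.InjOn (fun μ => a μ - 1) s := by
  intro μ hμ ν hν hgeq
  simp only at hgeq
  by_contra hne
  obtain ⟨hμ1, hμ2⟩ := hs μ (Finset.mem_coe.mp hμ)
  obtain ⟨hν1, hν2⟩ := hs ν (Finset.mem_coe.mp hν)
  rcases Nat.lt_or_ge μ ν with h | h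
  · have h3 := ha μ ν h hν2
    have h4 := a_pos ha hμ1 hμ2
    omega
  · have h' : ν < μ := by omega
    have h3 := ha ν μ h' hμ2
    have h4 := a_pos ha hν1 hν2
    omega

include hb in
lemma b_injOn {s : Finset ℕ} (hs : ∀ μ ∈ s, μ + 1 ≤ K) :
    Set.InjOn (fun μ => b μ - 1) s := by
  intro μ hμ ν hν hgeq
  simp only at hgeq
  by_contra hne
  have hμ2 := hs μ (Finset.mem_coe.mp hμ)
  have hν2 := hs ν (Finset.mem_coe.mp hν)
  rcases Nat.lt_or_ge μ ν with h | h
  · have h3 := hb μ ν h (by omega)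
    have h4 := b_pos hb hν2
    omega
  · have h' : ν < μ := by omega
    have h3 := hb ν μ h' (by omega)
    have h4 := b_pos hb hμ2
    omega

include ha in
lemma volume_ApD (hK : 1 ≤ K) : volume (ApD a K) = ENNReal.ofReal (dy K) := by
  rw [ApD, biInter_Gset_eq_sg]
  rw [pileIdx (Finset.Icc 1 K) (fun μ => a μ - 1)
    (a_injOn ha (fun μ hμ => Finset.mem_Icc.mp hμ)) _ 0 0 (fun μ _ => Nat.zero_le _)]
  congr 1
  congr 1
  rw [Nat.card_Icc]
  omega

include hb in
lemma volume_BpD (hK : 1 ≤ K) : volume (BpD b K) = ENNReal.ofReal (dy K) := by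
  rw [BpD, biInter_Gset_eq_sg]
  rw [pileIdx (Finset.Icc 0 (K-1)) (fun μ => b μ - 1)
    (b_injOn hb (fun μ hμ => by have := (Finset.mem_Icc.mp hμ).2; omega)) _ 0 0
    (fun μ _ => Nat.zero_le _)]
  congr 1
  congr 1
  rw [Nat.card_Icc]
  omega

include ha in
lemma volume_XpD {j : ℕ} (hj1 : 1 ≤ j) (hjK : j + 1 ≤ K) :
    volume (XpD a j) = ENNReal.ofReal (dy (j+1)) := by
  rw [XpD]
  rw [pileIdx (Finset.Icc 1 (j+1)) (fun μ => a μ - 1)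
    (a_injOn ha (fun μ hμ => by have := Finset.mem_Icc.mp hμ; omega)) _ 0 0
    (fun μ _ => Nat.zero_le _)]
  congr 1
  congr 1
  rw [Nat.card_Icc]
  omega

include hb in
lemma volume_YpD {i : ℕ} (hiK : i + 1 ≤ K) :
    volume (YpD b K i) = ENNReal.ofReal (dy (K-i)) := by
  rw [YpD]
  rw [biInter_Gset_eq_sg]
  rw [pileIdx (Finset.Icc i (K-1)) (fun μ => b μ - 1)
    (b_injOn hb (fun μ hμ => by have := (Finset.mem_Icc.mp hμ).2; omega)) _ 0 0
    (fun μ _ => Nat.zero_le _)]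
  congr 1
  congr 1
  rw [Nat.card_Icc]
  omega

include ha in
lemma XpD_mem_Gset {j μ : ℕ} {x : ℝ} (hx : x ∈ XpD a j) (hμ1 : 1 ≤ μ) (hμj : μ ≤ j)
    (hjK : j + 1 ≤ K) : x ∈ Gset (a μ - 1) := by
  have hxi := hx.2
  rw [Set.mem_iInter₂] at hxi
  have hmem : μ ∈ Finset.Icc 1 (j+1) := Finset.mem_Icc.mpr ⟨hμ1, by omega⟩
  have h := hxi μ hmem
  have hne : a μ - 1 ≠ a (j+1) - 1 := by
    have h3 := ha μ (j+1) (by omega) hjK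
    have h4 := a_pos ha hμ1 (by omega)
    omega
  rw [sg, if_pos (by simpa using hne)] at h
  exact h

include ha in
lemma XpD_not_mem_Gset {j : ℕ} {x : ℝ} (hx : x ∈ XpD a j) (hj1 : 1 ≤ j) :
    x ∉ Gset (a (j+1) - 1) := by
  have hxi := hx.2
  rw [Set.mem_iInter₂] at hxi
  have hmem : (j+1) ∈ Finset.Icc 1 (j+1) := Finset.mem_Icc.mpr ⟨by omega, le_rfl⟩
  have h := hxi (j+1) hmem
  rw [sg, if_neg (by simp)] at h
  exact h

include ha in
lemma XpD_disj {j j' : ℕ} (hj1 : 1 ≤ j) (hjj' : j < j') (hj'K : j' + 1 ≤ K) :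
    Disjoint (XpD a j) (XpD a j') := by
  rw [Set.disjoint_left]
  intro x hx hx'
  exact XpD_not_mem_Gset ha hx hj1
    (XpD_mem_Gset ha hx' (by omega) (by omega) hj'K)

include hb in
lemma YpD_mem_Gset {i μ : ℕ} {y : ℝ} (hy : y ∈ YpD b K i) (hμi : i ≤ μ) (hμK : μ + 1 ≤ K) :
    y ∈ Gset (b μ - 1) := by
  have hyi := hy.2
  rw [Set.mem_iInter₂] at hyi
  exact hyi μ (Finset.mem_Icc.mpr ⟨hμi, by omega⟩)

include ha in
lemma density_A {j : ℕ} {x : ℝ} (hx : x ∈ XpD a j) (hj1 : 1 ≤ j) (hjK : j + 1 ≤ K) :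
    volume (cell (a j) ⌊(2:ℝ)^(a j) * x⌋ ∩ ApD a K)
      = ENNReal.ofReal (dy (a j + (K - j))) := by
  set n₁ := ⌊(2:ℝ)^(a j) * x⌋ with hn₁
  have hxI : x ∈ cell (a j) n₁ := mem_cell_floor _ _
  have hx01 : x ∈ Ico (0:ℝ) 1 := by
    have := hx.1
    rwa [cell_zero] at this
  have hIunit : cell (a j) n₁ ⊆ cell 0 0 := cell_floor_subset_unit hx01.1 hx01.2
  have hIL : ∀ μ, 1 ≤ μ → μ ≤ j → cell (a j) n₁ ⊆ Gset (a μ - 1) := by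
    intro μ h1 h2 y hy
    have hxg : x ∈ Gset (a μ - 1) := XpD_mem_Gset ha hx h1 h2 hjK
    have haμ : a μ ≤ a j := by
      rcases Nat.lt_or_ge μ j with h | h
      · exact (ha μ j h (by omega)).le
      · have : μ = j := by omega
        rw [this]
    have hple : (a μ - 1) + 1 ≤ a j := by
      have := a_pos ha h1 (by omega)
      omega
    exact freeze hple hxI hy hxg
  have hEq : cell (a j) n₁ ∩ ApD a K
      = cell (a j) n₁ ∩ ⋂ μ ∈ Finset.Icc (j+1) K, Gset (a μ - 1) := by
    apply subset_antisymm
    · rintro y ⟨hyI, _, hyA⟩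
      refine ⟨hyI, ?_⟩
      rw [Set.mem_iInter₂] at hyA ⊢
      intro μ hμ
      have hμ' := Finset.mem_Icc.mp hμ
      exact hyA μ (Finset.mem_Icc.mpr ⟨by omega, hμ'.2⟩)
    · rintro y ⟨hyI, hyH⟩
      refine ⟨hyI, hIunit hyI, ?_⟩
      rw [Set.mem_iInter₂] at hyH ⊢
      intro μ hμ
      have hμ' := Finset.mem_Icc.mp hμ
      rcases le_or_gt μ j with h | h
      · exact hIL μ hμ'.1 h hyI
      · exact hyH μ (Finset.mem_Icc.mpr ⟨by omega, hμ'.2⟩)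
  rw [hEq, biInter_Gset_eq_sg]
  rw [pileIdx (Finset.Icc (j+1) K) (fun μ => a μ - 1)
    (a_injOn ha (fun μ hμ => by have := Finset.mem_Icc.mp hμ; omega)) _ (a j) n₁
    (fun μ hμ => by
      have hμ' := Finset.mem_Icc.mp hμ
      have := ha j μ (by omega) hμ'.2
      show a j ≤ a μ - 1
      omega)]
  congr 1
  congr 1
  rw [Nat.card_Icc]
  omega

include ha hb in
lemma density_B {i : ℕ} {y : ℝ} (hy : y ∈ YpD b K i) (hiK : i + 1 ≤ K) :
    volume (cell (b i) ⌊(2:ℝ)^(b i) * y⌋ ∩ BpD b K)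
      = ENNReal.ofReal (dy (b i + i)) := by
  set n₂ := ⌊(2:ℝ)^(b i) * y⌋ with hn₂
  have hyI : y ∈ cell (b i) n₂ := mem_cell_floor _ _
  have hy01 : y ∈ Ico (0:ℝ) 1 := by
    have := hy.1
    rwa [cell_zero] at this
  have hIunit : cell (b i) n₂ ⊆ cell 0 0 := cell_floor_subset_unit hy01.1 hy01.2
  have hIL : ∀ μ, i ≤ μ → μ + 1 ≤ K → cell (b i) n₂ ⊆ Gset (b μ - 1) := by
    intro μ h1 h2 u hu
    have hyg : y ∈ Gset (b μ - 1) := YpD_mem_Gset hb hy h1 h2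
    have hbμ : b μ ≤ b i := by
      rcases Nat.lt_or_ge i μ with h | h
      · exact (hb i μ h (by omega)).le
      · have : μ = i := by omega
        rw [this]
    have hple : (b μ - 1) + 1 ≤ b i := by
      have := b_pos hb h2
      omega
    exact freeze hple hyI hu hyg
  have hEq : cell (b i) n₂ ∩ BpD b K
      = cell (b i) n₂ ∩ ⋂ μ ∈ Finset.Ico 0 i, Gset (b μ - 1) := by
    apply subset_antisymm
    · rintro u ⟨huI, _, huA⟩
      refine ⟨huI, ?_⟩
      rw [Set.mem_iInter₂] at huA ⊢
      intro μ hμ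
      have hμ' := Finset.mem_Ico.mp hμ
      exact huA μ (Finset.mem_Icc.mpr ⟨by omega, by omega⟩)
    · rintro u ⟨huI, huH⟩
      refine ⟨huI, hIunit huI, ?_⟩
      rw [Set.mem_iInter₂] at huH ⊢
      intro μ hμ
      have hμ' := Finset.mem_Icc.mp hμ
      rcases le_or_gt i μ with h | h
      · exact hIL μ h (by omega) huI
      · exact huH μ (Finset.mem_Ico.mpr ⟨by omega, h⟩)
  rw [hEq, biInter_Gset_eq_sg]
  rw [pileIdx (Finset.Ico 0 i) (fun μ => b μ - 1)
    (b_injOn hb (fun μ hμ => by have := (Finset.mem_Ico.mp hμ).2; omega)) _ (b i) n₂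
    (fun μ hμ => by
      have hμ' := Finset.mem_Ico.mp hμ
      have := hb μ i hμ'.2 (by omega)
      show b i ≤ b μ - 1
      omega)]
  congr 1
  congr 1
  rw [Nat.card_Ico]
  omega

end Staircase

end SoriaSharp

set_option maxHeartbeats 1000000 in
/-- Remark `rmk.stok2008`, after Stokolos' theorem on Soria bases.
If `𝓡'` (standard dyadic rectangles in `ℝ²`) contains arbitrarily large finite subfamilies
of pairwise incomparable rectangles whose pairwise intersections stay in `𝓡'`, then the
maximal operator of the Soria family `𝓡 = {R × [0,2^{-m}] : R ∈ 𝓡', m ∈ ℕ}` in `ℝ³`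
satisfies no weak `L^Φ` inequality for any Orlicz `Φ = o(Φ₂)` at `∞`. -/
theorem soria_sharp (𝓡' : Set (Set (Fin 2 → ℝ)))
    (h𝓡' : ∀ R ∈ 𝓡', IsStandardDyadicRect R)
    (H : ∀ k : ℕ, ∃ F : Finset (Set (Fin 2 → ℝ)), ↑F ⊆ 𝓡' ∧ 2 * k + 1 ≤ F.card ∧
      ∀ R ∈ F, ∀ R' ∈ F, R ≠ R' →
        (¬ R ⊆ R' ∧ ¬ R' ⊆ R) ∧ R ∩ R' ∈ 𝓡') :
    ∀ Φ : ℝ → ℝ, IsOrlicz Φ →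
      Tendsto (fun t => Φ t / phiD 2 t) atTop (nhds 0) →
      ¬ WeakOrlicz
        { S : Set (Fin 3 → ℝ) | ∃ R ∈ 𝓡', ∃ m : ℕ,
          S = { x : Fin 3 → ℝ | (fun i : Fin 2 => x i.castSucc) ∈ R ∧
            x 2 ∈ Set.Icc 0 ((2 : ℝ) ^ (-(m : ℤ))) } } Φ := by
  classical
  intro Φ hΦ hTend hWO
  obtain ⟨C, hC, hW⟩ := hWO
  -- Orlicz basics
  have hΦ0 : Φ 0 = 0 := hΦ.2.2
  have hΦnn : ∀ t : ℝ, 0 ≤ t → 0 ≤ Φ t := by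
    intro t ht
    have h := hΦ.2.1 (Set.self_mem_Ici) (Set.mem_Ici.mpr ht) ht
    rw [hΦ0] at h
    exact h
  -- constants
  set lC : ℝ := max (Real.log C) 0 with hlC
  have hlCnn : 0 ≤ lC := le_max_right _ _
  set D : ℝ := 1 + 2 * lC^2 + 2 * (Real.log 2)^2 with hD
  have hDpos : 0 < D := by positivity
  set ε : ℝ := 1 / (2^7 * C * D) with hε
  have hεpos : 0 < ε := by positivity
  -- threshold from the tendsto hypothesis
  obtain ⟨T₀, hT₀⟩ := eventually_atTop.mp (hTend.eventually_lt_const hεpos)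
  -- choice of the parameter k
  obtain ⟨N, hN⟩ := pow_unbounded_of_one_lt (R := ℝ) (max T₀ 1 / C) one_lt_two
  set k : ℕ := max 2 N with hk
  have hk2 : 2 ≤ k := le_max_left _ _
  set K : ℕ := 2 * k with hK
  have hK4 : 4 ≤ K := by omega
  have hNK : (2:ℝ)^N ≤ 2^K := pow_le_pow_right₀ one_le_two (by omega)
  have hCK : max T₀ 1 ≤ C * 2^K := by
    have h1 : max T₀ 1 < 2^N * C := (div_lt_iff₀ hC).mp hN
    nlinarith [hNK, hC]
  -- the staircase
  obtain ⟨a, b, ha, hb, hmem⟩ := SoriaSharp.extract 𝓡' h𝓡' H K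
  -- the counterexample set and function
  set A' : Set ℝ := SoriaSharp.ApD a K with hA'
  set B' : Set ℝ := SoriaSharp.BpD b K with hB'
  set E : Set (Fin 3 → ℝ) := SoriaSharp.P3 A' B' (Icc 0 (SoriaSharp.dy K)) with hE
  set f : (Fin 3 → ℝ) → ℝ := fun z => if z ∈ E then 1 else 0 with hf
  have hEmeas : MeasurableSet E := by
    rw [hE, hA', hB']
    exact SoriaSharp.measurableSet_P3 (SoriaSharp.measurableSet_ApD a K)
      (SoriaSharp.measurableSet_BpD b K) measurableSet_Icc
  have hfmeas : Measurable f := by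
    rw [hf]
    exact Measurable.ite hEmeas measurable_const measurable_const
  have hvolE : volume E = ENNReal.ofReal (SoriaSharp.dy (3*K)) := by
    rw [hE, hA', hB', SoriaSharp.volume_P3, SoriaSharp.volume_ApD ha (by omega),
      SoriaSharp.volume_BpD hb (by omega), Real.volume_Icc, sub_zero]
    rw [← ENNReal.ofReal_mul (SoriaSharp.dy_pos _).le,
      ← ENNReal.ofReal_mul (mul_nonneg (SoriaSharp.dy_pos _).le (SoriaSharp.dy_pos _).le)]
    congr 1
    rw [← SoriaSharp.dy_add, ← SoriaSharp.dy_add, show K+K+K = 3*K from by ring]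
  have hint : Integrable (fun z => Φ |f z|) := by
    have hexpr : (fun z => Φ |f z|) = E.indicator (fun _ => Φ 1) := by
      funext z
      by_cases hz : z ∈ E
      · simp [hf, hz, Set.indicator_of_mem]
      · simp [hf, hz, Set.indicator_of_notMem, hΦ0]
    rw [hexpr, integrable_indicator_iff hEmeas]
    apply (integrableOn_const_iff).mpr
    right
    rw [hvolE]
    exact ENNReal.ofReal_lt_top
  -- value of the right-hand side
  have hargeq : C * (1:ℝ) / SoriaSharp.dy K = C * 2^K := by
    unfold SoriaSharp.dy
    field_simp
  have hRHS : (∫⁻ z, ENNReal.ofReal (Φ (C * |f z| / SoriaSharp.dy K)))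
      = ENNReal.ofReal (Φ (C * 2^K)) * ENNReal.ofReal (SoriaSharp.dy (3*K)) := by
    have hexpr : (fun z => ENNReal.ofReal (Φ (C * |f z| / SoriaSharp.dy K)))
        = E.indicator (fun _ => ENNReal.ofReal (Φ (C * 2^K))) := by
      funext z
      by_cases hz : z ∈ E
      · rw [Set.indicator_of_mem hz]
        have hfz : f z = 1 := by rw [hf]; exact if_pos hz
        rw [hfz, abs_one, hargeq]
      · rw [Set.indicator_of_notMem hz]
        have hfz : f z = 0 := by rw [hf]; exact if_neg hz
        rw [hfz, abs_zero, mul_zero, zero_div, hΦ0, ENNReal.ofReal_zero]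
    rw [hexpr, lintegral_indicator hEmeas, setLIntegral_const, hvolE]
  -- the pieces
  set PcF : ℕ × ℕ → Set (Fin 3 → ℝ) := fun p =>
    SoriaSharp.P3 (SoriaSharp.XpD a (p.2 + p.1 + 1)) (SoriaSharp.YpD b K p.2)
      (Ioc (SoriaSharp.dy (K - p.1 + 1)) (SoriaSharp.dy (K - p.1))) with hPcF
  set Idx : Finset (ℕ × ℕ) := Finset.Icc 1 (k-1) ×ˢ Finset.range k with hIdx
  have hIdxmem : ∀ p ∈ Idx, 1 ≤ p.1 ∧ p.1 ≤ k - 1 ∧ p.2 < k := by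
    intro p hp
    rw [hIdx, Finset.mem_product, Finset.mem_Icc, Finset.mem_range] at hp
    exact ⟨hp.1.1, hp.1.2, hp.2⟩
  -- each piece is inside the level set
  have hpieceSub : ∀ t i : ℕ, 1 ≤ t → t ≤ k - 1 → i < k →
      SoriaSharp.P3 (SoriaSharp.XpD a (i + t + 1)) (SoriaSharp.YpD b K i)
        (Ioc (SoriaSharp.dy (K - t + 1)) (SoriaSharp.dy (K - t)))
      ⊆ {z | ENNReal.ofReal (SoriaSharp.dy K) < maximalFn
          { S : Set (Fin 3 → ℝ) | ∃ R ∈ 𝓡', ∃ m : ℕ,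
            S = { x : Fin 3 → ℝ | (fun i : Fin 2 => x i.castSucc) ∈ R ∧
              x 2 ∈ Set.Icc 0 ((2 : ℝ) ^ (-(m : ℤ))) } } f z} := by
    intro t i ht1 ht2 hik z hz
    obtain ⟨hz0, hz1, hz2⟩ := SoriaSharp.mem_P3.mp hz
    set j := i + t + 1 with hj
    set m := K - t with hm
    have hjK : j + 1 ≤ K := by omega
    set n₁ := ⌊(2:ℝ)^(a j) * z 0⌋ with hn₁
    set n₂ := ⌊(2:ℝ)^(b i) * z 1⌋ with hn₂
    have hxI : z 0 ∈ SoriaSharp.cell (a j) n₁ := by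
      rw [hn₁]; exact SoriaSharp.mem_cell_floor _ _
    have hyI : z 1 ∈ SoriaSharp.cell (b i) n₂ := by
      rw [hn₂]; exact SoriaSharp.mem_cell_floor _ _
    have hR0mem : stdRect 2 (fun s : Fin 2 => if s = 0 then (2:ℝ)^(-(a j : ℤ))
        else (2:ℝ)^(-(b i : ℤ))) ∈ 𝓡' := hmem i j (by omega) (by omega)
    set S : Set (Fin 3 → ℝ) := { x : Fin 3 → ℝ |
        (fun i : Fin 2 => x i.castSucc) ∈ stdRect 2 (fun s : Fin 2 =>
          if s = 0 then (2:ℝ)^(-(a j : ℤ)) else (2:ℝ)^(-(b i : ℤ))) ∧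
        x 2 ∈ Set.Icc 0 ((2 : ℝ) ^ (-(m : ℤ))) } with hS
    have hSmem : S ∈ { S : Set (Fin 3 → ℝ) | ∃ R ∈ 𝓡', ∃ m : ℕ,
        S = { x : Fin 3 → ℝ | (fun i : Fin 2 => x i.castSucc) ∈ R ∧
          x 2 ∈ Set.Icc 0 ((2 : ℝ) ^ (-(m : ℤ))) } } := ⟨_, hR0mem, m, hS⟩
    have hSP3 : S = SoriaSharp.P3 (Icc 0 (SoriaSharp.dy (a j)))
        (Icc 0 (SoriaSharp.dy (b i))) (Icc 0 (SoriaSharp.dy m)) := by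
      rw [hS]
      ext u
      simp only [Set.mem_setOf_eq]
      constructor
      · rintro ⟨hu1, hu2⟩
        rw [stdRect, Set.mem_univ_pi] at hu1
        have h0 := hu1 0
        have h1 := hu1 1
        rw [if_pos (show (0:Fin 2) = 0 from rfl)] at h0
        rw [if_neg (show ¬((1:Fin 2) = 0) from by decide)] at h1
        rw [Fin.castSucc_zero] at h0
        rw [Fin.castSucc_one] at h1
        rw [SoriaSharp.dy_zpow] at h0 h1
        rw [SoriaSharp.dy_zpow] at hu2
        rw [SoriaSharp.mem_P3]
        exact ⟨h0, h1, hu2⟩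
      · intro hu
        rw [SoriaSharp.mem_P3] at hu
        constructor
        · rw [stdRect, Set.mem_univ_pi]
          intro s
          by_cases hs : s = 0
          · subst hs
            rw [if_pos (show (0:Fin 2) = 0 from rfl), Fin.castSucc_zero,
              SoriaSharp.dy_zpow]
            exact hu.1
          · rw [show s = 1 from by omega,
              if_neg (show ¬((1:Fin 2) = 0) from by decide), Fin.castSucc_one,
              SoriaSharp.dy_zpow]
            exact hu.2.1
        · rw [SoriaSharp.dy_zpow]
          exact hu.2.2
    set v : Fin 3 → ℝ := fun u => if u = 0 then (n₁:ℝ) * SoriaSharp.dy (a j)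
      else if u = 1 then (n₂:ℝ) * SoriaSharp.dy (b i) else 0 with hv
    have hv0 : v 0 = (n₁:ℝ) * SoriaSharp.dy (a j) := by simp [hv]
    have hv1 : v 1 = (n₂:ℝ) * SoriaSharp.dy (b i) := by simp [hv]
    have hv2 : v 2 = 0 := by simp [hv]
    have hTP3 : (fun y_ => v + y_) '' S
        = SoriaSharp.P3 (Icc ((n₁:ℝ) * SoriaSharp.dy (a j)) ((n₁:ℝ) * SoriaSharp.dy (a j) + SoriaSharp.dy (a j)))
          (Icc ((n₂:ℝ) * SoriaSharp.dy (b i)) ((n₂:ℝ) * SoriaSharp.dy (b i) + SoriaSharp.dy (b i)))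
          (Icc 0 (SoriaSharp.dy m)) := by
      rw [hSP3, SoriaSharp.image_translate_P3, hv0, hv1, hv2, add_zero, add_zero,
        zero_add, zero_add]
    have hzT : z ∈ (fun y_ => v + y_) '' S := by
      rw [hTP3, SoriaSharp.mem_P3]
      have hh1 : ((n₁:ℝ)+1) * SoriaSharp.dy (a j)
          = (n₁:ℝ) * SoriaSharp.dy (a j) + SoriaSharp.dy (a j) := by ring
      have hh2 : ((n₂:ℝ)+1) * SoriaSharp.dy (b i)
          = (n₂:ℝ) * SoriaSharp.dy (b i) + SoriaSharp.dy (b i) := by ring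
      refine ⟨⟨hxI.1, ?_⟩, ⟨hyI.1, ?_⟩, ⟨?_, ?_⟩⟩
      · have h2 := hxI.2
        rw [hh1] at h2
        exact h2.le
      · have h2 := hyI.2
        rw [hh2] at h2
        exact h2.le
      · exact ((SoriaSharp.dy_pos _).trans hz2.1).le
      · exact hz2.2
    have hdA : volume (SoriaSharp.cell (a j) n₁ ∩ A')
        = ENNReal.ofReal (SoriaSharp.dy (a j + (K - j))) := by
      rw [hA', hn₁]
      exact SoriaSharp.density_A ha hz0 (by omega) hjK
    have hdB : volume (SoriaSharp.cell (b i) n₂ ∩ B')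
        = ENNReal.ofReal (SoriaSharp.dy (b i + i)) := by
      rw [hB', hn₂]
      exact SoriaSharp.density_B ha hb hz1 (by omega)
    have hinner : SoriaSharp.P3 (SoriaSharp.cell (a j) n₁ ∩ A')
        (SoriaSharp.cell (b i) n₂ ∩ B') (Icc 0 (SoriaSharp.dy K))
        ⊆ E ∩ ((fun y_ => v + y_) '' S) := by
      intro u hu
      obtain ⟨hu0, hu1, hu2⟩ := SoriaSharp.mem_P3.mp hu
      constructor
      · rw [hE, SoriaSharp.mem_P3]
        exact ⟨hu0.2, hu1.2, hu2⟩
      · rw [hTP3, SoriaSharp.mem_P3]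
        have hh1 : ((n₁:ℝ)+1) * SoriaSharp.dy (a j)
            = (n₁:ℝ) * SoriaSharp.dy (a j) + SoriaSharp.dy (a j) := by ring
        have hh2 : ((n₂:ℝ)+1) * SoriaSharp.dy (b i)
            = (n₂:ℝ) * SoriaSharp.dy (b i) + SoriaSharp.dy (b i) := by ring
        refine ⟨⟨hu0.1.1, ?_⟩, ⟨hu1.1.1, ?_⟩, ⟨hu2.1, ?_⟩⟩
        · have h2 := hu0.1.2; rw [hh1] at h2; exact h2.le
        · have h2 := hu1.1.2; rw [hh2] at h2; exact h2.le
        · exact hu2.2.trans (SoriaSharp.dy_le_dy (by omega))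
    have hinnervol : volume (SoriaSharp.P3 (SoriaSharp.cell (a j) n₁ ∩ A')
        (SoriaSharp.cell (b i) n₂ ∩ B') (Icc 0 (SoriaSharp.dy K)))
        = ENNReal.ofReal (SoriaSharp.dy ((a j + (K-j)) + (b i + i) + K)) := by
      rw [SoriaSharp.volume_P3, hdA, hdB, Real.volume_Icc, sub_zero]
      rw [← ENNReal.ofReal_mul (SoriaSharp.dy_pos _).le,
        ← ENNReal.ofReal_mul (mul_nonneg (SoriaSharp.dy_pos _).le (SoriaSharp.dy_pos _).le)]
      congr 1
      rw [SoriaSharp.dy_expand3]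
    have hvolS : volume S = ENNReal.ofReal (SoriaSharp.dy (a j + b i + m)) := by
      rw [hSP3, SoriaSharp.volume_P3, Real.volume_Icc, Real.volume_Icc,
        Real.volume_Icc, sub_zero, sub_zero, sub_zero]
      rw [← ENNReal.ofReal_mul (SoriaSharp.dy_pos _).le,
        ← ENNReal.ofReal_mul (mul_nonneg (SoriaSharp.dy_pos _).le (SoriaSharp.dy_pos _).le)]
      congr 1
      rw [SoriaSharp.dy_expand3]
    have hfun : (fun u => ENNReal.ofReal |f u|) = E.indicator (fun _ => (1:ℝ≥0∞)) := by
      funext u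
      by_cases hu : u ∈ E
      · rw [Set.indicator_of_mem hu]
        have hfu : f u = 1 := by rw [hf]; exact if_pos hu
        rw [hfu, abs_one, ENNReal.ofReal_one]
      · rw [Set.indicator_of_notMem hu]
        have hfu : f u = 0 := by rw [hf]; exact if_neg hu
        rw [hfu, abs_zero, ENNReal.ofReal_zero]
    have hnum : ENNReal.ofReal (SoriaSharp.dy ((a j + (K-j)) + (b i + i) + K))
        ≤ ∫⁻ u in (fun y_ => v + y_) '' S, ENNReal.ofReal |f u| := by
      rw [hfun, lintegral_indicator hEmeas, setLIntegral_one,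
        Measure.restrict_apply hEmeas]
      rw [← hinnervol]
      exact measure_mono hinner
    have hdivle : ENNReal.ofReal (SoriaSharp.dy (K-1))
        ≤ (∫⁻ u in (fun y_ => v + y_) '' S, ENNReal.ofReal |f u|) / volume S := by
      rw [hvolS]
      have heq : ENNReal.ofReal (SoriaSharp.dy (K-1))
          = ENNReal.ofReal (SoriaSharp.dy ((a j + (K-j)) + (b i + i) + K))
            / ENNReal.ofReal (SoriaSharp.dy (a j + b i + m)) := by
        rw [← ENNReal.ofReal_div_of_pos (SoriaSharp.dy_pos _)]
        congr 1
        have hexp : (a j + (K-j)) + (b i + i) + K = (a j + b i + m) + (K-1) := by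
          omega
        rw [hexp, SoriaSharp.dy_add, mul_comm, mul_div_assoc,
          div_self (ne_of_gt (SoriaSharp.dy_pos _)), mul_one]
      rw [heq]
      exact ENNReal.div_le_div_right hnum _
    simp only [Set.mem_setOf_eq]
    have h1 : ENNReal.ofReal (SoriaSharp.dy K) < ENNReal.ofReal (SoriaSharp.dy (K-1)) := by
      rw [ENNReal.ofReal_lt_ofReal_iff (SoriaSharp.dy_pos _)]
      exact SoriaSharp.dy_lt_dy (by omega)
    apply lt_of_lt_of_le h1
    apply le_trans hdivle
    unfold maximalFn
    exact le_iSup_of_le S (le_iSup_of_le hSmem (le_iSup_of_le v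
      (le_iSup_of_le hzT le_rfl)))
  -- volumes of the pieces
  have hpieceVol : ∀ p ∈ Idx, volume (PcF p) = ENNReal.ofReal (SoriaSharp.dy (2*K+3)) := by
    intro p hp
    obtain ⟨hp1, hp2, hp3⟩ := hIdxmem p hp
    rw [hPcF]
    rw [SoriaSharp.volume_P3, SoriaSharp.volume_XpD ha (by omega) (by omega),
      SoriaSharp.volume_YpD hb (by omega), Real.volume_Ioc]
    have hslice : SoriaSharp.dy (K - p.1) - SoriaSharp.dy (K - p.1 + 1)
        = SoriaSharp.dy (K - p.1 + 1) := by
      rw [SoriaSharp.dy_succ (K - p.1)]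
      ring
    rw [hslice]
    rw [← ENNReal.ofReal_mul (SoriaSharp.dy_pos _).le,
      ← ENNReal.ofReal_mul (mul_nonneg (SoriaSharp.dy_pos _).le (SoriaSharp.dy_pos _).le)]
    congr 1
    rw [← SoriaSharp.dy_add, ← SoriaSharp.dy_add]
    congr 1
    omega
  have hpieceMeas : ∀ p ∈ Idx, MeasurableSet (PcF p) := by
    intro p _
    rw [hPcF]
    exact SoriaSharp.measurableSet_P3 (SoriaSharp.measurableSet_XpD _ _)
      (SoriaSharp.measurableSet_YpD _ _ _) measurableSet_Ioc
  have hpairwise : (↑Idx : Set (ℕ × ℕ)).PairwiseDisjoint PcF := by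
    intro p hp q hq hne
    obtain ⟨hp1, hp2, hp3⟩ := hIdxmem p (Finset.mem_coe.mp hp)
    obtain ⟨hq1, hq2, hq3⟩ := hIdxmem q (Finset.mem_coe.mp hq)
    show Disjoint (PcF p) (PcF q)
    by_cases ht : p.1 = q.1
    · have hi : p.2 ≠ q.2 := by
        intro h
        exact hne (Prod.ext ht h)
      have hXd : ∀ i i' : ℕ, i < i' → i' < k →
          Disjoint (SoriaSharp.XpD a (i + p.1 + 1)) (SoriaSharp.XpD a (i' + p.1 + 1)) := by
        intro i i' h1 h2
        exact SoriaSharp.XpD_disj ha (by omega) (by omega) (by omega)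
      rw [hPcF]
      rcases Nat.lt_or_ge p.2 q.2 with h | h
      · apply SoriaSharp.P3_disjoint0
        rw [← ht]
        exact hXd p.2 q.2 h hq3
      · apply SoriaSharp.P3_disjoint0
        rw [← ht]
        exact (hXd q.2 p.2 (by omega) hp3).symm
    · rw [hPcF]
      apply SoriaSharp.P3_disjoint2
      have hgen : ∀ t t' : ℕ, t < t' → t' ≤ k - 1 →
          Disjoint (Ioc (SoriaSharp.dy (K - t + 1)) (SoriaSharp.dy (K - t)))
            (Ioc (SoriaSharp.dy (K - t' + 1)) (SoriaSharp.dy (K - t'))) := by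
        intro t t' h1 h2
        rw [Set.disjoint_left]
        intro w hw hw'
        have hle : SoriaSharp.dy (K - t) ≤ SoriaSharp.dy (K - t' + 1) :=
          SoriaSharp.dy_le_dy (by omega)
        have h3 := hw.2
        have h4 := hw'.1
        linarith
      rcases Nat.lt_or_ge p.1 q.1 with h | h
      · exact hgen p.1 q.1 h hq2
      · exact (hgen q.1 p.1 (by omega) hp2).symm
  have hcardIdx : Idx.card = (k-1) * k := by
    rw [hIdx, Finset.card_product, Nat.card_Icc, Finset.card_range]
    congr 1
  have hsum : ∑ p ∈ Idx, volume (PcF p)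
      = (((k-1)*k : ℕ) : ℝ≥0∞) * ENNReal.ofReal (SoriaSharp.dy (2*K+3)) := by
    rw [Finset.sum_congr rfl hpieceVol, Finset.sum_const, nsmul_eq_mul, hcardIdx]
  -- the chain of inequalities
  have hUsub : (⋃ p ∈ Idx, PcF p) ⊆ {z | ENNReal.ofReal (SoriaSharp.dy K) < maximalFn
      { S : Set (Fin 3 → ℝ) | ∃ R ∈ 𝓡', ∃ m : ℕ,
        S = { x : Fin 3 → ℝ | (fun i : Fin 2 => x i.castSucc) ∈ R ∧
          x 2 ∈ Set.Icc 0 ((2 : ℝ) ^ (-(m : ℤ))) } } f z} := by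
    apply Set.iUnion₂_subset
    intro p hp
    obtain ⟨hp1, hp2, hp3⟩ := hIdxmem p hp
    rw [hPcF]
    exact hpieceSub p.1 p.2 hp1 hp2 hp3
  have hchain : (((k-1)*k : ℕ) : ℝ≥0∞) * ENNReal.ofReal (SoriaSharp.dy (2*K+3))
      ≤ ENNReal.ofReal (Φ (C * 2^K)) * ENNReal.ofReal (SoriaSharp.dy (3*K)) := by
    calc (((k-1)*k : ℕ) : ℝ≥0∞) * ENNReal.ofReal (SoriaSharp.dy (2*K+3))
        = ∑ p ∈ Idx, volume (PcF p) := hsum.symm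
      _ = volume (⋃ p ∈ Idx, PcF p) := (measure_biUnion_finset hpairwise hpieceMeas).symm
      _ ≤ volume {z | ENNReal.ofReal (SoriaSharp.dy K) < maximalFn
            { S : Set (Fin 3 → ℝ) | ∃ R ∈ 𝓡', ∃ m : ℕ,
              S = { x : Fin 3 → ℝ | (fun i : Fin 2 => x i.castSucc) ∈ R ∧
                x 2 ∈ Set.Icc 0 ((2 : ℝ) ^ (-(m : ℤ))) } } f z} := measure_mono hUsub
      _ ≤ ∫⁻ z, ENNReal.ofReal (Φ (C * |f z| / SoriaSharp.dy K)) :=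
            hW f hfmeas hint (SoriaSharp.dy K) (SoriaSharp.dy_pos K)
      _ = _ := hRHS
  -- back to the reals
  have hΦarg : 0 ≤ Φ (C * 2^K) := hΦnn _ (by positivity)
  have hrealineq : (((k-1)*k : ℕ) : ℝ) * SoriaSharp.dy (2*K+3)
      ≤ Φ (C * 2^K) * SoriaSharp.dy (3*K) := by
    have h1 : (((k-1)*k : ℕ) : ℝ≥0∞) * ENNReal.ofReal (SoriaSharp.dy (2*K+3))
        = ENNReal.ofReal ((((k-1)*k : ℕ) : ℝ) * SoriaSharp.dy (2*K+3)) := by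
      rw [ENNReal.ofReal_mul (Nat.cast_nonneg _), ENNReal.ofReal_natCast]
    have h2 : ENNReal.ofReal (Φ (C * 2^K)) * ENNReal.ofReal (SoriaSharp.dy (3*K))
        = ENNReal.ofReal (Φ (C * 2^K) * SoriaSharp.dy (3*K)) :=
      (ENNReal.ofReal_mul hΦarg).symm
    rw [h1, h2] at hchain
    exact (ENNReal.ofReal_le_ofReal_iff
      (mul_nonneg hΦarg (SoriaSharp.dy_pos _).le)).mp hchain
  -- upper bound for Φ via the o(Φ₂) hypothesis
  have hTle : T₀ ≤ C * 2^K := le_trans (le_max_left _ _) hCK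
  have hΦdiv := hT₀ (C * 2^K) hTle
  have htpos : (0:ℝ) < C * 2^K := by positivity
  have hphipos : 0 < phiD 2 (C * 2^K) := by
    rw [phiD]
    apply mul_pos htpos
    nlinarith [sq_nonneg (max (Real.log (C * 2^K)) 0)]
  have hΦlt : Φ (C * 2^K) < ε * phiD 2 (C * 2^K) := by
    rw [div_lt_iff₀ hphipos] at hΦdiv
    linarith
  have hlog2pos : 0 < Real.log 2 := Real.log_pos one_lt_two
  have hlogeq : Real.log (C * 2^K) = Real.log C + (K:ℝ) * Real.log 2 := by
    rw [Real.log_mul (ne_of_gt hC) (by positivity), Real.log_pow]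
  have hK1 : (1:ℝ) ≤ (K:ℝ) := by
    have : (1:ℕ) ≤ K := by omega
    exact_mod_cast this
  have hmaxle : max (Real.log (C * 2^K)) 0 ≤ lC + (K:ℝ) * Real.log 2 := by
    have h2 : (0:ℝ) ≤ (K:ℝ) * Real.log 2 := by positivity
    apply max_le
    · rw [hlogeq]
      have h1 : Real.log C ≤ lC := le_max_left _ _
      linarith
    · linarith
  have hsq : (max (Real.log (C * 2^K)) 0)^2 ≤ 2*lC^2 + 2*((K:ℝ) * Real.log 2)^2 := by
    have h0 : (0:ℝ) ≤ max (Real.log (C * 2^K)) 0 := le_max_right _ _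
    nlinarith [sq_nonneg (lC - (K:ℝ) * Real.log 2), hmaxle, h0]
  have hK2 : (1:ℝ) ≤ (K:ℝ)^2 := by nlinarith
  have hphile : phiD 2 (C * 2^K) ≤ C * 2^K * ((K:ℝ)^2 * D) := by
    rw [phiD]
    apply mul_le_mul_of_nonneg_left ?_ htpos.le
    rw [hD]
    nlinarith [hsq, mul_nonneg (sub_nonneg.mpr hK2) (sq_nonneg lC),
      mul_nonneg (sub_nonneg.mpr hK2) (sq_nonneg (Real.log 2)),
      mul_pow (K:ℝ) (Real.log 2) 2]
  have hup : Φ (C * 2^K) < (K:ℝ)^2 * 2^K / 2^7 := by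
    have h1 : ε * phiD 2 (C * 2^K) ≤ ε * (C * 2^K * ((K:ℝ)^2 * D)) :=
      mul_le_mul_of_nonneg_left hphile hεpos.le
    have h2 : ε * (C * 2^K * ((K:ℝ)^2 * D)) = (K:ℝ)^2 * 2^K / 2^7 := by
      rw [hε]
      field_simp
    have h3 := lt_of_lt_of_le hΦlt h1
    rwa [h2] at h3
  -- final numeric contradiction
  have hkR : (2:ℝ) ≤ (k:ℝ) := by exact_mod_cast hk2
  have hKR : (K:ℝ) = 2 * (k:ℝ) := by rw [hK]; push_cast; ring
  have hcast : (((k-1)*k : ℕ) : ℝ) = ((k:ℝ) - 1) * (k:ℝ) := by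
    rw [Nat.cast_mul, Nat.cast_sub (by omega : 1 ≤ k), Nat.cast_one]
  have hsplit3 : SoriaSharp.dy (3*K) = SoriaSharp.dy (2*K+3) * SoriaSharp.dy (K-3) := by
    rw [← SoriaSharp.dy_add]
    congr 1
    omega
  have h8 : (2:ℝ)^K * SoriaSharp.dy (K-3) = 8 := by
    have hKd : (2:ℝ)^K = 2^(K-3) * 2^3 := by
      rw [← pow_add]
      congr 1
      omega
    calc (2:ℝ)^K * SoriaSharp.dy (K-3)
        = ((2:ℝ)^(K-3) * SoriaSharp.dy (K-3)) * 2^3 := by rw [hKd]; ring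
      _ = 8 := by rw [SoriaSharp.two_pow_dy]; norm_num
  have hd2 := SoriaSharp.dy_pos (2*K+3)
  have hd3 := SoriaSharp.dy_pos (K-3)
  have hdiv : ((k:ℝ) - 1) * (k:ℝ) ≤ Φ (C * 2^K) * SoriaSharp.dy (K-3) := by
    rw [hcast, hsplit3] at hrealineq
    exact le_of_mul_le_mul_right (by nlinarith [hrealineq]) hd2
  have hstep := mul_lt_mul_of_pos_right hup hd3
  have hval : ((K:ℝ)^2 * 2^K / 2^7) * SoriaSharp.dy (K-3) = (k:ℝ)^2 / 4 := by
    have hh : ((K:ℝ)^2 * 2^K / 2^7) * SoriaSharp.dy (K-3)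
        = (K:ℝ)^2 * ((2:ℝ)^K * SoriaSharp.dy (K-3)) / 2^7 := by ring
    rw [hh, h8, hKR]
    ring
  rw [hval] at hstep
  nlinarith [hdiv, hstep, hkR]


end
end
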